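/- arXiv:math/0608749 — 8 statements merged into one kernel-verified Lean document; each statement's English description precedes it below -/
import Mathlib

section
/- Let (V,⟨·,·⟩) be a finite-dimensional real inner product space, J an Hermitian almost complex structure (an isometry with J² = -id), and R an algebraic curvature tensor on V. The following are equivalent: (1) R(x,y,z,t) = R(Jx,Jy,Jz,Jt) for all x,y,z,t ∈ V; (2) the complex Jacobi operator 𝒥_R(π_x) := 𝒥_R(x) + 𝒥_R(Jx) commutes with J for every unit vector x. -/
open RealInnerProductSpace

variable {V : Type*} [NormedAddCommGroup V] [InnerProductSpace ℝ V] [FiniteDimensional ℝ V]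

/-- The Jacobi operator of an algebraic curvature tensor, characterized by
`⟪jacobiOp R x y, z⟫ = R y x x z`. -/
noncomputable def jacobiOp (R : V →ₗ[ℝ] V →ₗ[ℝ] V →ₗ[ℝ] V →ₗ[ℝ] ℝ) (x : V) :
    V →ₗ[ℝ] V where
  toFun y := (InnerProductSpace.toDual ℝ V).symm (LinearMap.toContinuousLinearMap (R y x x))
  map_add' y₁ y₂ := by simp [map_add]
  map_smul' c y := by simp [map_smul]

theorem jacobiOp_inner (R : V →ₗ[ℝ] V →ₗ[ℝ] V →ₗ[ℝ] V →ₗ[ℝ] ℝ) (x y z : V) :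
    ⟪jacobiOp R x y, z⟫ = R y x x z := by
  simp only [jacobiOp, LinearMap.coe_mk, AddHom.coe_mk]
  rw [InnerProductSpace.toDual_symm_apply]
  simp

theorem curv_neg1 (R : V →ₗ[ℝ] V →ₗ[ℝ] V →ₗ[ℝ] V →ₗ[ℝ] ℝ) (a b c d : V) :
    R (-a) b c d = - R a b c d := by
  rw [show -a = (-1 : ℝ) • a by simp, map_smul]; simp

/-- Compatibility of `R` and `J` is equivalent to the complex Jacobi operator
`𝒥_R(π_x) = 𝒥_R(x) + 𝒥_R(Jx)` being complex linear for every unit `x`. -/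
theorem stmt_3 (J : V →ₗ[ℝ] V)
    (hJiso : ∀ x y : V, ⟪J x, J y⟫ = ⟪x, y⟫) (hJ2 : J ∘ₗ J = -LinearMap.id)
    (R : V →ₗ[ℝ] V →ₗ[ℝ] V →ₗ[ℝ] V →ₗ[ℝ] ℝ)
    (hanti : ∀ x y z t : V, R x y z t = - R y x z t)
    (hpair : ∀ x y z t : V, R x y z t = R z t x y)
    (hbianchi : ∀ x y z t : V, R x y z t + R y z x t + R z x y t = 0) :
    (∀ x y z t : V, R x y z t = R (J x) (J y) (J z) (J t)) ↔
    (∀ x : V, ‖x‖ = 1 →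
      (jacobiOp R x + jacobiOp R (J x)) ∘ₗ J = J ∘ₗ (jacobiOp R x + jacobiOp R (J x))) := by
  have hJJ : ∀ v : V, J (J v) = -v := by
    intro v
    have := LinearMap.congr_fun hJ2 v
    simpa using this
  have hadj : ∀ w z : V, ⟪J w, z⟫ = -⟪w, J z⟫ := by
    intro w z
    have h1 : ⟪J w, J (J z)⟫ = ⟪w, J z⟫ := hJiso w (J z)
    rw [hJJ z, inner_neg_right] at h1
    linarith
  -- antisymmetry in the last two slots
  have hlast : ∀ x y z t : V, R x y z t = - R x y t z := by
    intro x y z t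
    rw [hpair x y z t, hanti z t x y, hpair t z x y]
  constructor
  · -- forward: compatibility ⇒ commuting
    intro h x _
    apply LinearMap.ext
    intro y
    apply ext_inner_right ℝ
    intro v
    simp only [LinearMap.comp_apply, LinearMap.add_apply, inner_add_left,
      jacobiOp_inner, hadj, inner_add_right, jacobiOp_inner]
    have h1 : R (J y) x x v = - R y (J x) (J x) (J v) := by
      rw [h (J y) x x v, hJJ y]
      simp [map_neg, curv_neg1]
    have h2 : R (J y) (J x) (J x) v = - R y x x (J v) := by
      rw [h (J y) (J x) (J x) v, hJJ, hJJ]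
      simp [map_neg, curv_neg1]
    rw [h1, h2]; ring
  · -- backward: commuting ⇒ compatibility
    intro h
    -- step 1: the key identity for unit vectors, then for all vectors by scaling
    have key1 : ∀ x : V, ‖x‖ = 1 → ∀ y z : V,
        R (J y) x x z + R (J y) (J x) (J x) z
          + R y x x (J z) + R y (J x) (J x) (J z) = 0 := by
      intro x hx y z
      have hc := LinearMap.congr_fun (h x hx) y
      have hi : ⟪((jacobiOp R x + jacobiOp R (J x)) ∘ₗ J) y, z⟫
          = ⟪(J ∘ₗ (jacobiOp R x + jacobiOp R (J x))) y, z⟫ := by rw [hc]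
      simp only [LinearMap.comp_apply, LinearMap.add_apply, inner_add_left,
        jacobiOp_inner, hadj, inner_add_left] at hi
      linarith
    have key : ∀ x y z : V,
        R (J y) x x z + R (J y) (J x) (J x) z
          + R y x x (J z) + R y (J x) (J x) (J z) = 0 := by
      intro x y z
      rcases eq_or_ne x 0 with rfl | hx
      · simp
      · have hu : ‖(‖x‖⁻¹ • x)‖ = 1 := norm_smul_inv_norm hx
        have hk := key1 (‖x‖⁻¹ • x) hu y z
        simp only [map_smul, LinearMap.smul_apply, smul_eq_mul] at hk
        have hc : ‖x‖⁻¹ ≠ 0 := inv_ne_zero (norm_ne_zero_iff.mpr hx)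
        have h2 : ‖x‖⁻¹ * ‖x‖⁻¹ * (R (J y) x x z + R (J y) (J x) (J x) z
            + R y x x (J z) + R y (J x) (J x) (J z)) = 0 := by
          rw [← hk]; ring
        rcases mul_eq_zero.mp h2 with h3 | h3
        · exact absurd h3 (mul_ne_zero hc hc)
        · exact h3
    -- the anti-invariant part T
    set T : V → V → V → V → ℝ :=
      fun a b c d => R a b c d - R (J a) (J b) (J c) (J d) with hT
    have hTdef : ∀ a b c d : V, T a b c d = R a b c d - R (J a) (J b) (J c) (J d) :=
      fun _ _ _ _ => rfl
    have TJ : ∀ a b c d : V, T (J a) (J b) (J c) (J d) = - T a b c d := by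
      intro a b c d
      simp only [hTdef, hJJ, map_neg, LinearMap.neg_apply, curv_neg1]
      ring
    have Tanti : ∀ a b c d : V, T a b c d = - T b a c d := by
      intro a b c d
      simp only [hTdef]; rw [hanti a b, hanti (J a) (J b)]; ring
    have Tpair : ∀ a b c d : V, T a b c d = T c d a b := by
      intro a b c d
      simp only [hTdef]; rw [hpair a b, hpair (J a) (J b)]
    have Tlast : ∀ a b c d : V, T a b c d = - T a b d c := by
      intro a b c d
      simp only [hTdef]; rw [hlast a b, hlast (J a) (J b)]; ring
    have Tbianchi : ∀ a b c d : V, T a b c d + T b c a d + T c a b d = 0 := by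
      intro a b c d
      simp only [hTdef]
      have h1 := hbianchi a b c d
      have h2 := hbianchi (J a) (J b) (J c) (J d)
      linarith
    -- the hypothesis in terms of T
    have H : ∀ x y z : V, T (J y) x x z + T y x x (J z) = 0 := by
      intro x y z
      have := key x y z
      simp only [hTdef, hJJ, map_neg, LinearMap.neg_apply, curv_neg1]
      linarith
    -- T y x x z = - T y (Jx) (Jx) z
    have star : ∀ y x z : V, T y x x z = - T y (J x) (J x) z := by
      intro y x z
      have h1 := H x (J y) z
      rw [hJJ y] at h1
      have h1' : T (J y) x x (J z) = T y x x z := by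
        have : T (-y) x x z = - T y x x z := by
          simp only [hTdef, map_neg, LinearMap.neg_apply, curv_neg1]; ring
        linarith [this]
      have h2 : T (J y) x x (J z) = - T y (J x) (J x) z := by
        have h3 := TJ y (-(J x)) (-(J x)) z
        simp only [map_neg, hJJ, neg_neg] at h3
        have h4 : T y (-(J x)) (-(J x)) z = T y (J x) (J x) z := by
          simp only [hTdef, map_neg, LinearMap.neg_apply, curv_neg1]; ring
        rw [h4] at h3
        linarith [h3]
      linarith
    -- polarize star in x: P(x,w;y,z) = -P(Jx,Jw;y,z)
    have pol : ∀ y x w z : V, T y x w z + T y w x z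
        = - T y (J x) (J w) z - T y (J w) (J x) z := by
      intro y x w z
      have h1 := star y (x + w) z
      have h2 := star y x z
      have h3 := star y w z
      simp only [hTdef, map_add, LinearMap.add_apply] at h1 h2 h3 ⊢
      linarith
    -- the symmetry P(x,w;y,z) = P(y,z;x,w)
    have Psymm : ∀ x w y z : V, T y x w z + T y w x z = T x y z w + T x z y w := by
      intro x w y z
      have h1 : T y x w z = T x y z w := by
        rw [Tanti y x w z, Tlast x y w z]; ring_nf
      have h2 : T y w x z = T x z y w := Tpair y w x z
      linarith
    -- conclude P = 0
    have Pzero : ∀ y x w z : V, T y x w z + T y w x z = 0 := by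
      intro y x w z
      -- P(x,w;y,z) = -P(Jx,Jw;y,z) = -P(y,z;Jx,Jw) = P(Jy,Jz;Jx,Jw) = P(Jx,Jw;Jy,Jz)
      have h1 := pol y x w z
      -- -P(y,z;Jx,Jw) = P(Jy,Jz;Jx,Jw):
      have h2 := pol (J x) y z (J w)
      -- h2 : T (Jx) y z (Jw) + T (Jx) z y (Jw) = -T (Jx) (Jy) (Jz) (Jw) - T (Jx) (Jz) (Jy) (Jw)
      have h3 := Psymm (J x) (J w) y z
      have h4 := Psymm (J x) (J w) (J y) (J z)
      -- TJ on the terms of P(Jx,Jw;Jy,Jz)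
      have h5 := TJ y x w z
      have h6 := TJ y w x z
      linarith
    -- finish: T is antisymmetric in slots 2,3, combine with Bianchi
    have Tzero : ∀ a b c d : V, T a b c d = 0 := by
      intro a b c d
      have hb := Tbianchi a b c d
      have e1 : T b c a d = T a b c d := by
        have := Pzero b c a d
        have := Tanti b a c d
        linarith [Pzero b c a d, Tanti b a c d]
      have e2 : T c a b d = T a b c d := by
        linarith [Pzero c a b d, Tanti c b a d, e1]
      linarith
    intro x y z t
    have := Tzero x y z t
    simp only [hTdef] at this
    linarith
end

section
/- Let V, W be finite-dimensional real vector spaces and T₁,…,T_κ : V → W linear maps such that every nonzero linear combination a₁T₁ + … + a_κT_κ has rank at least μ. If μ ≥ κ, then there exists x ∈ V such that T₁x, …, T_κx are linearly independent. -/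
open Module Submodule Polynomial

theorem core_aux {W : Type*} [AddCommGroup W] [Module ℝ W] [FiniteDimensional ℝ W]
    {κ : ℕ} (v w : Fin κ → W) (a : Fin κ → ℝ)
    (ha : ∑ i, a i • v i = 0)
    (hle : ∀ t : ℝ, Module.finrank ℝ (span ℝ (Set.range fun i => v i + t • w i)) ≤
      Module.finrank ℝ (span ℝ (Set.range v))) :
    ∑ i, a i • w i ∈ span ℝ (Set.range v) := by
  classical
  set z : W := ∑ i, a i • w i with hz
  set U : Submodule ℝ W := span ℝ (Set.range v) with hU
  obtain ⟨b, hbsub, hbspan, hbind⟩ := exists_linearIndependent ℝ (Set.range v)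
  have hbfin : b.Finite := (Set.finite_range v).subset hbsub
  haveI : Fintype b := hbfin.fintype
  have hidx : ∀ x : b, ∃ i, v i = (x : W) := fun x => hbsub x.2
  choose ι hι using hidx
  -- dual functionals
  have hmem : ∀ x : b, (x : W) ∈ LinearIndepOn.extend (K := ℝ) (v := id) hbind (Set.subset_univ b) :=
    fun x => LinearIndepOn.subset_extend (K := ℝ) (v := id) hbind _ x.2
  set φ : b → Module.Dual ℝ W :=
    fun x => (Basis.extend hbind).coord ⟨(x : W), hmem x⟩ with hφ
  have hself : ∀ x : b, ((x : b) : W) = Basis.extend hbind ⟨(x : W), hmem x⟩ :=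
    fun x => (Basis.extend_apply_self hbind ⟨(x : W), hmem x⟩).symm
  have hφδ : ∀ x y : b, φ y ((x : b) : W) = if x = y then 1 else 0 := by
    intro x y
    rw [hφ]
    simp only []
    rw [hself x, Basis.coord_apply, Basis.repr_self, Finsupp.single_apply]
    simp [Subtype.ext_iff]
  -- polynomial matrix
  set M : Matrix b b (Polynomial ℝ) :=
    Matrix.of fun x y => C (φ y (v (ι x))) + X * C (φ y (w (ι x))) with hM
  set p : Polynomial ℝ := M.det with hp
  have hMap : ∀ t : ℝ, M.map (eval t) = Matrix.of fun x y => φ y (v (ι x) + t • w (ι x)) := by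
    intro t
    ext x y
    simp only [hM, Matrix.map_apply, Matrix.of_apply, eval_add, eval_mul, eval_C, eval_X,
      map_add, map_smul, smul_eq_mul]
  have hpt : ∀ t : ℝ, p.eval t = (M.map (eval t)).det := by
    intro t
    have := RingHom.map_det (evalRingHom t) M
    simpa [RingHom.mapMatrix_apply] using this
  have hp0 : p.eval 0 = 1 := by
    rw [hpt 0]
    have h1 : M.map (eval 0) = 1 := by
      ext x y
      rw [hMap 0]
      simp only [Matrix.of_apply, zero_smul, add_zero, hι]
      rw [hφδ x y]
      simp [Matrix.one_apply]
    rw [h1, Matrix.det_one]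
  set q : b → Polynomial ℝ := M.transpose.adjugate.mulVec (fun y => C (φ y z)) with hq
  -- the key pointwise identity
  have key : ∀ t : ℝ, t ≠ 0 → p.eval t ≠ 0 →
      ∑ x : b, (q x).eval t • (v (ι x) + t • w (ι x)) = p.eval t • z := by
    intro t ht hpne
    set u : b → W := fun x => v (ι x) + t • w (ι x) with hu
    set At : Matrix b b ℝ := M.map (eval t) with hAt
    have hAtdet : At.det = p.eval t := (hpt t).symm
    have hAtunit : IsUnit At := by
      rw [Matrix.isUnit_iff_isUnit_det, hAtdet]
      exact hpne.isUnit
    have hrow : ∀ x y : b, At x y = φ y (u x) := by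
      intro x y; rw [hAt, hMap t]; rfl
    -- u is linearly independent
    have huind : LinearIndependent ℝ u := by
      have hAind : LinearIndependent ℝ (fun x : b => At x) :=
        Matrix.linearIndependent_rows_iff_isUnit.2 hAtunit
      let Φ : W →ₗ[ℝ] (b → ℝ) := LinearMap.pi fun y => φ y
      have hcomp : (Φ ∘ u) = fun x : b => At x := by
        funext x; funext y
        simp [Φ, LinearMap.pi_apply, hrow x y]
      apply LinearIndependent.of_comp Φ
      rw [hcomp]; exact hAind
    -- span equality
    set P : Submodule ℝ W := span ℝ (Set.range fun i => v i + t • w i) with hP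
    have hle1 : span ℝ (Set.range u) ≤ P := by
      rw [span_le]
      rintro _ ⟨x, rfl⟩
      exact subset_span ⟨ι x, rfl⟩
    have hcard : finrank ℝ U = Fintype.card b := by
      rw [hU, ← hbspan, finrank_span_set_eq_card hbind, Set.toFinset_card]
    have hspan_eq : span ℝ (Set.range u) = P := by
      apply Submodule.eq_of_le_of_finrank_le hle1
      calc finrank ℝ P ≤ finrank ℝ U := hle t
        _ = Fintype.card b := hcard
        _ = finrank ℝ (span ℝ (Set.range u)) := (finrank_span_eq_card huind).symm
    -- z in P
    have hsum : ∑ i, a i • (v i + t • w i) = t • z := by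
      calc ∑ i, a i • (v i + t • w i) = ∑ i, (a i • v i + t • (a i • w i)) := by
            refine Finset.sum_congr rfl fun i _ => ?_
            rw [smul_add, smul_comm]
        _ = ∑ i, a i • v i + t • ∑ i, a i • w i := by
            rw [Finset.sum_add_distrib, Finset.smul_sum]
        _ = t • z := by rw [ha, zero_add]
    have hzP : z ∈ P := by
      have h1 : t • z ∈ P := by
        rw [← hsum]
        exact Submodule.sum_smul_mem P a fun i _ => subset_span ⟨i, rfl⟩
      have h2 := P.smul_mem t⁻¹ h1
      rwa [smul_smul, inv_mul_cancel₀ ht, one_smul] at h2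
    have hzu : z ∈ span ℝ (Set.range u) := hspan_eq ▸ hzP
    obtain ⟨c, hc⟩ := (mem_span_range_iff_exists_fun ℝ).1 hzu
    -- vecMul identity
    have hφz : (fun y : b => φ y z) = Matrix.vecMul c At := by
      funext y
      rw [← hc]
      simp only [map_sum, map_smul, smul_eq_mul]
      rw [Matrix.vecMul, dotProduct]
      refine Finset.sum_congr rfl fun x _ => ?_
      rw [hrow x y]
    have hdetc : (fun x : b => p.eval t * c x)
        = Matrix.vecMul (fun y : b => φ y z) At.adjugate := by
      rw [hφz, Matrix.vecMul_vecMul, Matrix.mul_adjugate, hAtdet]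
      funext x
      simp [Matrix.vecMul, dotProduct, Matrix.smul_apply, Matrix.one_apply, mul_comm,
        Finset.sum_ite_eq', mul_ite]
    -- evaluate q
    have hqev : ∀ x : b, (q x).eval t = p.eval t * c x := by
      intro x
      have hadj : M.transpose.adjugate.map (eval t) = At.transpose.adjugate := by
        have h3 := RingHom.map_adjugate (evalRingHom t) M.transpose
        have h4 : (evalRingHom t).mapMatrix M.transpose = At.transpose := by
          ext i j
          simp [RingHom.mapMatrix_apply, Matrix.transpose_map, hAt]
        rw [← h4]
        rw [← h3]
        rfl
      have h5 : (q x).eval t = (At.transpose.adjugate.mulVec fun y : b => φ y z) x := by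
        rw [hq, ← hadj]
        simp [Matrix.mulVec, dotProduct, eval_finset_sum, Matrix.map_apply]
      rw [h5, ← Matrix.adjugate_transpose, Matrix.mulVec_transpose, ← hdetc]
    calc ∑ x : b, (q x).eval t • u x = ∑ x : b, (p.eval t * c x) • u x := by
          refine Finset.sum_congr rfl fun x _ => ?_; rw [hqev x]
      _ = p.eval t • ∑ x : b, c x • u x := by
          rw [Finset.smul_sum]; refine Finset.sum_congr rfl fun x _ => ?_; rw [mul_smul]
      _ = p.eval t • z := by rw [hc]
  -- infinite set of good t
  have hpne : p ≠ 0 := fun h => by simp [h] at hp0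
  have hSinf : {t : ℝ | t ≠ 0 ∧ p.eval t ≠ 0}.Infinite := by
    have hfin : ({(0 : ℝ)} ∪ {t | p.IsRoot t}).Finite :=
      (Set.finite_singleton 0).union (Polynomial.finite_setOf_isRoot hpne)
    apply hfin.infinite_compl.mono
    intro t ht
    simp only [Set.mem_compl_iff, Set.mem_union, Set.mem_singleton_iff, Set.mem_setOf_eq,
      not_or] at ht
    exact ⟨ht.1, ht.2⟩
  -- dual argument
  have hfinal : ∀ ψ : Module.Dual ℝ W, ψ (z - ∑ x : b, (q x).eval 0 • v (ι x)) = 0 := by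
    intro ψ
    set g : Polynomial ℝ :=
      C (ψ z) * p - ∑ x : b, q x * (C (ψ (v (ι x))) + X * C (ψ (w (ι x)))) with hg
    have hgzero : g = 0 := by
      apply Polynomial.eq_zero_of_infinite_isRoot
      apply hSinf.mono
      rintro t ⟨ht, hpt'⟩
      have hk := congrArg ψ (key t ht hpt')
      simp only [map_sum, map_smul, map_add, smul_eq_mul] at hk
      show g.eval t = 0
      rw [hg]
      simp only [eval_sub, eval_mul, eval_C, eval_add, eval_X, eval_finset_sum]
      rw [sub_eq_zero, mul_comm]
      exact hk.symm
    have h6 := congrArg (eval 0) hgzero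
    rw [hg] at h6
    simp only [eval_sub, eval_mul, eval_C, eval_add, eval_X, eval_zero, eval_finset_sum,
      hp0, mul_one, zero_mul, add_zero] at h6
    have h8 : ψ (∑ x : b, (q x).eval 0 • v (ι x)) = ∑ x : b, (q x).eval 0 * ψ (v (ι x)) := by
      rw [map_sum]; simp only [map_smul, smul_eq_mul]
    rw [map_sub, h8]
    exact h6
  have h7 : z - ∑ x : b, (q x).eval 0 • v (ι x) = 0 :=
    (Module.forall_dual_apply_eq_zero_iff ℝ _).1 hfinal
  have hzeq : z = ∑ x : b, (q x).eval 0 • v (ι x) := by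
    rwa [sub_eq_zero] at h7
  rw [hU, hzeq]
  exact Submodule.sum_mem _ fun x _ => Submodule.smul_mem _ _ (subset_span ⟨ι x, rfl⟩)


/-- If every nonzero linear combination of `T₁,…,T_κ` has rank at least `μ ≥ κ`,
then there is `x` with `T₁x,…,T_κx` linearly independent. -/
theorem stmt_5 {V W : Type*} [AddCommGroup V] [Module ℝ V] [AddCommGroup W] [Module ℝ W]
    [FiniteDimensional ℝ V] [FiniteDimensional ℝ W]
    {κ μ : ℕ} (T : Fin κ → (V →ₗ[ℝ] W))
    (hrank : ∀ a : Fin κ → ℝ, a ≠ 0 →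
      μ ≤ Module.finrank ℝ (LinearMap.range (∑ i, a i • T i)))
    (hμ : κ ≤ μ) :
    ∃ x : V, LinearIndependent ℝ (fun i => T i x) := by
  classical
  set d : V → ℕ := fun x => Module.finrank ℝ (Submodule.span ℝ (Set.range fun i => T i x))
    with hd
  have hdbound : ∀ x, d x ≤ κ := by
    intro x
    calc d x ≤ (Set.range fun i => T i x).toFinset.card :=
          finrank_span_le_card _
      _ = Fintype.card (Set.range fun i => T i x) := Set.toFinset_card _
      _ ≤ Fintype.card (Fin κ) := Fintype.card_range_le _
      _ = κ := Fintype.card_fin κ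
  have hne : (Set.range d).Nonempty := ⟨d 0, 0, rfl⟩
  have hbdd : BddAbove (Set.range d) := ⟨κ, by rintro _ ⟨x, rfl⟩; exact hdbound x⟩
  obtain ⟨x₀, hx₀⟩ := Nat.sSup_mem hne hbdd
  have hmax : ∀ x, d x ≤ d x₀ := fun x => hx₀ ▸ le_csSup hbdd ⟨x, rfl⟩
  by_cases hind : LinearIndependent ℝ (fun i => T i x₀)
  · exact ⟨x₀, hind⟩
  exfalso
  -- d x₀ < κ
  have hlt : d x₀ < κ := by
    rcases lt_or_eq_of_le (hdbound x₀) with h | h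
    · exact h
    · exfalso
      apply hind
      rw [linearIndependent_iff_card_eq_finrank_span]
      rw [Fintype.card_fin]
      exact h.symm
  -- dependence relation
  obtain ⟨a, hsum0, i₀, hi₀⟩ := Fintype.not_linearIndependent_iff.1 hind
  have hane : a ≠ 0 := fun h => hi₀ (by rw [h]; rfl)
  have hrk := hrank a hane
  set S : V →ₗ[ℝ] W := ∑ i, a i • T i with hS
  set U : Submodule ℝ W := Submodule.span ℝ (Set.range fun i => T i x₀) with hU
  -- find y with S y ∉ U
  have hnotle : ¬ LinearMap.range S ≤ U := by
    intro hle
    have h1 : Module.finrank ℝ (LinearMap.range S) ≤ d x₀ :=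
      Submodule.finrank_mono hle
    omega
  obtain ⟨wv, hwmem, hwnot⟩ := SetLike.not_le_iff_exists.1 hnotle
  obtain ⟨y, rfl⟩ := hwmem
  -- apply the core lemma
  have hSapp : ∀ u : V, S u = ∑ i, a i • T i u := by
    intro u
    rw [hS]
    simp [LinearMap.sum_apply, LinearMap.smul_apply]
  have hcore := core_aux (fun i => T i x₀) (fun i => T i y) a
    hsum0
    (by
      intro t
      have heq : (fun i => T i x₀ + t • T i y) = fun i => T i (x₀ + t • y) := by
        funext i; simp [map_add, map_smul]
      rw [heq]
      exact hmax (x₀ + t • y))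
  rw [← hSapp y] at hcore
  exact hwnot hcore
end

section
/- Let V, W be finite-dimensional real vector spaces and T₁,…,T_κ : V → W linear maps such that every nonzero linear combination a₁T₁ + … + a_κT_κ has rank at least μ. If μ ≥ 2κ, then there exist x, y ∈ V such that T₁x,…,T_κx,T₁y,…,T_κy are 2κ linearly independent vectors. -/
open Module Set Matrix
open scoped ENNReal

section helpers
variable {X : Type*} [NormedAddCommGroup X] [NormedSpace ℝ X]

lemma myContDiff_finset_prod {α : Type*} {f : α → X → ℝ} (s : Finset α)
    (h : ∀ i ∈ s, ContDiff ℝ 1 (f i)) : ContDiff ℝ 1 (fun x => ∏ i ∈ s, f i x) := by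
  classical
  induction s using Finset.induction with
  | empty => simpa using contDiff_const
  | insert _ _ ha ih =>
      simp only [Finset.prod_insert ha]
      exact (h _ (Finset.mem_insert_self _ _)).mul
        (ih fun i hi => h i (Finset.mem_insert_of_mem hi))

lemma myContDiff_det {ι : Type*} [Fintype ι] [DecidableEq ι] {M : X → Matrix ι ι ℝ}
    (h : ∀ r s, ContDiff ℝ 1 fun x => M x r s) :
    ContDiff ℝ 1 fun x => (M x).det := by
  have hsign : ∀ (σ : Equiv.Perm ι) (y : ℝ),
      Equiv.Perm.sign σ • y = ((Equiv.Perm.sign σ : ℤ) : ℝ) * y := by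
    intro σ y; rw [Units.smul_def, zsmul_eq_mul]
  simp only [Matrix.det_apply, hsign]
  exact ContDiff.sum fun σ _ =>
    contDiff_const.mul (myContDiff_finset_prod _ fun i _ => h _ _)

end helpers

section defs
variable {n q κ m : ℕ}

private abbrev VV (n : ℕ) := Fin n → ℝ
private abbrev EE (n : ℕ) := (Fin n → ℝ) × (Fin n → ℝ)

private noncomputable def Smap (T : Fin κ → ((Fin n → ℝ) →ₗ[ℝ] (Fin q → ℝ))) :
    Fin κ ⊕ Fin κ → (EE n →ₗ[ℝ] VV q) :=
  Sum.elim (fun i => (T i).comp (LinearMap.fst ℝ _ _))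
    (fun i => (T i).comp (LinearMap.snd ℝ _ _))

private noncomputable def Lmap (T : Fin κ → ((Fin n → ℝ) →ₗ[ℝ] (Fin q → ℝ)))
    (c : Fin κ ⊕ Fin κ → ℝ) : EE n →ₗ[ℝ] VV q :=
  ∑ j, c j • Smap T j

private noncomputable def chartc (i : Fin κ ⊕ Fin κ) (p : {j : Fin κ ⊕ Fin κ // j ≠ i} → ℝ) :
    Fin κ ⊕ Fin κ → ℝ :=
  fun j => if h : j = i then 1 else p ⟨j, h⟩

private noncomputable def Amat (T : Fin κ → ((Fin n → ℝ) →ₗ[ℝ] (Fin q → ℝ)))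
    (c : Fin κ ⊕ Fin κ → ℝ) (z : Fin κ ⊕ Fin κ → EE n) (pp : Fin κ ⊕ Fin κ → VV q) :
    Matrix (Fin κ ⊕ Fin κ) (Fin κ ⊕ Fin κ) ℝ :=
  Matrix.of fun r s => pp r ⬝ᵥ (Lmap T c (z s))

private noncomputable def Psi (T : Fin κ → ((Fin n → ℝ) →ₗ[ℝ] (Fin q → ℝ))) (i : Fin κ ⊕ Fin κ)
    (z : Fin κ ⊕ Fin κ → EE n) (k : Fin m → EE n) (pp : Fin κ ⊕ Fin κ → VV q) :
    (({j : Fin κ ⊕ Fin κ // j ≠ i} → ℝ) × (Fin m → ℝ)) → EE n :=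
  fun pt =>
    (Amat T (chartc i pt.1) z pp).det • (∑ l, pt.2 l • k l) -
      ∑ s, ((Amat T (chartc i pt.1) z pp).adjugate *ᵥ
        (fun r => pp r ⬝ᵥ (Lmap T (chartc i pt.1) (∑ l, pt.2 l • k l)))) s • z s

private lemma psi_contDiff (T : Fin κ → ((Fin n → ℝ) →ₗ[ℝ] (Fin q → ℝ))) (i : Fin κ ⊕ Fin κ)
    (z : Fin κ ⊕ Fin κ → EE n) (k : Fin m → EE n) (pp : Fin κ ⊕ Fin κ → VV q) :
    ContDiff ℝ 1 (Psi T i z k pp) := by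
  set PT := (({j : Fin κ ⊕ Fin κ // j ≠ i} → ℝ) × (Fin m → ℝ))
  have hchart : ∀ j, ContDiff ℝ 1 fun pt : PT => chartc i pt.1 j := by
    intro j
    unfold chartc
    by_cases h : j = i
    · simp only [h, dif_pos]; exact contDiff_const
    · simp only [h, dif_neg, not_false_iff]
      exact contDiff_pi.mp (contDiff_fst (E := {j : Fin κ ⊕ Fin κ // j ≠ i} → ℝ) (F := Fin m → ℝ) (𝕜 := ℝ)) ⟨j, h⟩
  have hkvec : ContDiff ℝ 1 fun pt : PT => ∑ l, pt.2 l • k l :=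
    ContDiff.sum fun l _ =>
      ((contDiff_pi.mp (contDiff_snd (E := {j : Fin κ ⊕ Fin κ // j ≠ i} → ℝ) (F := Fin m → ℝ) (𝕜 := ℝ)) l).smul contDiff_const)
  have hL : ∀ (w : PT → EE n), ContDiff ℝ 1 w →
      ContDiff ℝ 1 fun pt : PT => Lmap T (chartc i pt.1) (w pt) := by
    intro w hw
    unfold Lmap
    simp only [LinearMap.sum_apply, LinearMap.smul_apply]
    exact ContDiff.sum fun j _ =>
      (hchart j).smul ((Smap T j).toContinuousLinearMap.contDiff.comp hw)
  have hdot : ∀ (v : VV q) (w : PT → VV q), ContDiff ℝ 1 w →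
      ContDiff ℝ 1 fun pt : PT => v ⬝ᵥ w pt := by
    intro v w hw
    simp only [dotProduct]
    exact ContDiff.sum fun t _ =>
      contDiff_const.mul (contDiff_pi.mp hw t)
  have hA : ∀ r s, ContDiff ℝ 1 fun pt : PT => Amat T (chartc i pt.1) z pp r s := by
    intro r s
    exact hdot _ _ (hL _ contDiff_const)
  have hdet : ContDiff ℝ 1 fun pt : PT => (Amat T (chartc i pt.1) z pp).det :=
    myContDiff_det hA
  have hadj : ∀ s r, ContDiff ℝ 1 fun pt : PT => (Amat T (chartc i pt.1) z pp).adjugate s r := by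
    intro s r
    simp only [Matrix.adjugate_apply]
    apply myContDiff_det
    intro a b
    simp only [Matrix.updateRow_apply]
    by_cases h : a = r
    · simp only [h, if_pos rfl]; exact contDiff_const
    · simp only [if_neg h]; exact hA a b
  have hMvec : ∀ r, ContDiff ℝ 1 fun pt : PT =>
      pp r ⬝ᵥ (Lmap T (chartc i pt.1) (∑ l, pt.2 l • k l)) := by
    intro r; exact hdot _ _ (hL _ hkvec)
  have hmv : ∀ s, ContDiff ℝ 1 fun pt : PT =>
      ((Amat T (chartc i pt.1) z pp).adjugate *ᵥ
        (fun r => pp r ⬝ᵥ (Lmap T (chartc i pt.1) (∑ l, pt.2 l • k l)))) s := by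
    intro s
    simp only [Matrix.mulVec, dotProduct]
    exact ContDiff.sum fun r _ => (hadj s r).mul (hMvec r)
  exact (hdet.smul hkvec).sub (ContDiff.sum fun s _ => (hmv s).smul contDiff_const)

end defs

section covering
variable {n q κ m : ℕ}

private lemma psi_smul (T : Fin κ → ((Fin n → ℝ) →ₗ[ℝ] (Fin q → ℝ))) (i : Fin κ ⊕ Fin κ)
    (z : Fin κ ⊕ Fin κ → EE n) (k : Fin m → EE n) (pp : Fin κ ⊕ Fin κ → VV q)
    (p : {j : Fin κ ⊕ Fin κ // j ≠ i} → ℝ) (t : Fin m → ℝ) (a : ℝ) :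
    Psi T i z k pp (p, a • t) = a • Psi T i z k pp (p, t) := by
  unfold Psi
  simp only [Pi.smul_apply, smul_smul]
  have hkv : (∑ l, (a • t l) • k l) = a • ∑ l, t l • k l := by
    rw [Finset.smul_sum]
    exact Finset.sum_congr rfl fun l _ => by rw [smul_assoc]
  rw [hkv, _root_.map_smul, smul_sub]
  congr 1
  · rw [smul_comm]
  · have hdotsmul : (fun r => pp r ⬝ᵥ (a • Lmap T (chartc i p) (∑ l, t l • k l))) =
        a • fun r => pp r ⬝ᵥ (Lmap T (chartc i p) (∑ l, t l • k l)) := by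
      funext r
      simp [dotProduct_smul, smul_eq_mul]
    rw [hdotsmul, Matrix.mulVec_smul]
    rw [Finset.smul_sum]
    exact Finset.sum_congr rfl fun s _ => by
      rw [Pi.smul_apply, smul_assoc]

end covering

section cover2
variable {n q κ m : ℕ}

private lemma ker_subset_range_psi (T : Fin κ → ((Fin n → ℝ) →ₗ[ℝ] (Fin q → ℝ)))
    (i : Fin κ ⊕ Fin κ) (z : Fin κ ⊕ Fin κ → EE n) (k : Fin m → EE n)
    (pp : Fin κ ⊕ Fin κ → VV q) (c : Fin κ ⊕ Fin κ → ℝ) (hci : c i = 1)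
    (hdet : (Amat T c z pp).det ≠ 0)
    (hspan : Submodule.span ℝ (Set.range (Sum.elim z k)) = ⊤) :
    (LinearMap.ker (Lmap T c) : Set (EE n)) ⊆ Set.range (Psi T i z k pp) := by
  classical
  intro e he
  have he0 : Lmap T c e = 0 := he
  -- chart coordinates of c
  set p : {j : Fin κ ⊕ Fin κ // j ≠ i} → ℝ := fun j => c j with hp
  have hc : chartc i p = c := by
    funext j
    unfold chartc
    by_cases h : j = i
    · simp [h, hci]
    · simp [h, hp]
  -- coefficients of e
  have hmem : e ∈ Submodule.span ℝ (Set.range (Sum.elim z k)) := by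
    rw [hspan]; trivial
  obtain ⟨g, hg⟩ := (Submodule.mem_span_range_iff_exists_fun ℝ).1 hmem
  set v : Fin κ ⊕ Fin κ → ℝ := fun s => g (Sum.inl s) with hv
  set t : Fin m → ℝ := fun l => g (Sum.inr l) with ht
  have hsplit : (∑ s, v s • z s) + (∑ l, t l • k l) = e := by
    have h := (Fintype.sum_sum_type (f := fun j => g j • Sum.elim z k j)).symm.trans hg
    simpa only [Sum.elim_inl, Sum.elim_inr] using h
  set kv : EE n := ∑ l, t l • k l with hkv
  set Zv : EE n := ∑ s, v s • z s with hZv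
  set A := Amat T c z pp with hA
  -- key linear identity
  have hkey : ∀ r, (A *ᵥ v) r + pp r ⬝ᵥ (Lmap T c kv) = 0 := by
    intro r
    have hLZv : Lmap T c Zv = ∑ s, v s • Lmap T c (z s) := by
      rw [hZv, map_sum]
      simp only [_root_.map_smul]
    have h1 : (A *ᵥ v) r = pp r ⬝ᵥ (Lmap T c Zv) := by
      rw [hLZv]
      simp only [Matrix.mulVec, dotProduct, hA, Amat, Matrix.of_apply, Finset.sum_apply,
        Pi.smul_apply, smul_eq_mul, Finset.mul_sum, Finset.sum_mul]
      rw [Finset.sum_comm]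
      exact Finset.sum_congr rfl fun s _ => Finset.sum_congr rfl fun tt _ => by ring
    rw [h1, ← dotProduct_add, ← map_add, hsplit, he0]
    simp
  have hAv : A *ᵥ v + (fun r => pp r ⬝ᵥ (Lmap T c kv)) = 0 := by
    funext r
    exact hkey r
  -- adjugate identity
  have hadj : A.adjugate *ᵥ (fun r => pp r ⬝ᵥ (Lmap T c kv)) = -(A.det • v) := by
    have h2 : (fun r => pp r ⬝ᵥ (Lmap T c kv)) = -(A *ᵥ v) := by
      rw [eq_neg_iff_add_eq_zero, add_comm]
      exact hAv
    rw [h2, Matrix.mulVec_neg, Matrix.mulVec_mulVec, Matrix.adjugate_mul,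
      Matrix.smul_mulVec, Matrix.one_mulVec]
  -- compute Psi at (p, t)
  have hPsi : Psi T i z k pp (p, t) = A.det • e := by
    unfold Psi
    simp only [hc]
    rw [hadj]
    have : (∑ s, (-(A.det • v)) s • z s) = -(A.det • Zv) := by
      rw [hZv, Finset.smul_sum, ← Finset.sum_neg_distrib]
      refine Finset.sum_congr rfl fun s _ => ?_
      simp [smul_smul]
    rw [this, sub_neg_eq_add, ← smul_add, ← hkv]
    rw [add_comm kv Zv, hsplit]
  refine ⟨(p, (A.det)⁻¹ • t), ?_⟩
  rw [psi_smul, hPsi, smul_smul, inv_mul_cancel₀ hdet, one_smul]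

end cover2

section good
variable {n q κ m : ℕ}

private lemma exists_good (T : Fin κ → ((Fin n → ℝ) →ₗ[ℝ] (Fin q → ℝ)))
    (hEdim : finrank ℝ (EE n) = 2 * κ + m) (c : Fin κ ⊕ Fin κ → ℝ)
    (hrk : 2 * κ ≤ finrank ℝ (LinearMap.range (Lmap T c))) :
    ∃ (z : Fin κ ⊕ Fin κ → EE n) (k : Fin m → EE n) (pp : Fin κ ⊕ Fin κ → VV q),
      LinearIndependent ℝ (Sum.elim z k) ∧ (Amat T c z pp).det ≠ 0 := by
  classical
  have hcard : Fintype.card (Fin κ ⊕ Fin κ) = 2 * κ := by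
    simp [Fintype.card_sum, two_mul]
  -- independent family in the range
  obtain ⟨f, hf⟩ := exists_linearIndependent_of_le_finrank
    (R := ℝ) (M := LinearMap.range (Lmap T c)) (n := Fintype.card (Fin κ ⊕ Fin κ))
    (by rw [hcard]; exact hrk)
  set eqv := Fintype.equivFin (Fin κ ⊕ Fin κ) with heqv
  set w : Fin κ ⊕ Fin κ → VV q := fun s => (f (eqv s) : VV q) with hwdef
  have hw : LinearIndependent ℝ w := by
    have h1 : LinearIndependent ℝ (f ∘ eqv) := hf.comp eqv eqv.injective
    exact h1.map' (LinearMap.range (Lmap T c)).subtype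
      (Submodule.ker_subtype _)
  -- preimages
  have hpre : ∀ s, ∃ x : EE n, Lmap T c x = w s := fun s => (f (eqv s)).2
  set z : Fin κ ⊕ Fin κ → EE n := fun s => (hpre s).choose with hzdef
  have hLz : ∀ s, Lmap T c (z s) = w s := fun s => (hpre s).choose_spec
  have hz : LinearIndependent ℝ z := by
    apply LinearIndependent.of_comp (Lmap T c)
    have : (Lmap T c) ∘ z = w := funext hLz
    rw [this]; exact hw
  -- complement
  set Z := Submodule.span ℝ (Set.range z) with hZ
  obtain ⟨F, hF⟩ := Z.exists_isCompl
  have hdimZ : finrank ℝ Z = 2 * κ := by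
    rw [hZ, finrank_span_eq_card hz, hcard]
  have hdimF : finrank ℝ F = m := by
    have := Submodule.finrank_add_eq_of_isCompl hF
    omega
  set b := Module.finBasisOfFinrankEq ℝ F hdimF with hb
  set k : Fin m → EE n := fun l => (b l : EE n) with hk
  have hindep : LinearIndependent ℝ (Sum.elim z k) := by
    refine hz.sum_type ?_ ?_
    · exact (b.linearIndependent).map' F.subtype (Submodule.ker_subtype _)
    · have hsk : Submodule.span ℝ (Set.range k) = F := by
        have : Set.range k = F.subtype '' Set.range b := by
          rw [← Set.range_comp]; rfl
        rw [this, ← Submodule.map_span, b.span_eq, Submodule.map_top, Submodule.range_subtype]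
      rw [hsk, ← hZ]
      exact hF.disjoint
  -- construct pp
  set G : (Fin κ ⊕ Fin κ → ℝ) →ₗ[ℝ] VV q := ∑ s, (LinearMap.proj s).smulRight (w s) with hG
  have hGapp : ∀ u, G u = ∑ s, u s • w s := by
    intro u
    rw [hG]
    simp [LinearMap.sum_apply, LinearMap.smulRight_apply, LinearMap.proj_apply]
  have hGinj : LinearMap.ker G = ⊥ := by
    rw [LinearMap.ker_eq_bot']
    intro u hu
    rw [hGapp] at hu
    exact funext (Fintype.linearIndependent_iff.mp hw u hu)
  obtain ⟨φ, hφ⟩ := G.exists_leftInverse_of_injective hGinj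
  set pp : Fin κ ⊕ Fin κ → VV q := fun r => fun tt => φ (Pi.single tt 1) r with hpp
  have hsingle : ∀ tt : Fin q, (fun j => if tt = j then (1:ℝ) else 0) = Pi.single tt 1 := by
    intro tt; funext j
    by_cases h : tt = j
    · simp [h, Pi.single_apply]
    · simp [Pi.single_apply, h, Ne.symm h]
  have hdotφ : ∀ (r) (y : VV q), pp r ⬝ᵥ y = φ y r := by
    intro r y
    conv_rhs => rw [pi_eq_sum_univ y]
    simp only [hsingle]
    rw [map_sum, Finset.sum_apply]
    simp only [dotProduct, _root_.map_smul, Pi.smul_apply, smul_eq_mul, hpp]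
    exact Finset.sum_congr rfl fun tt _ => mul_comm _ _
  have hφw : ∀ s, φ (w s) = Pi.single s 1 := by
    intro s
    have h1 : G (Pi.single s 1) = w s := by
      rw [hGapp]
      rw [Finset.sum_eq_single s]
      · simp
      · intro b' _ hb'; simp [Pi.single_apply, hb']
      · intro h; exact absurd (Finset.mem_univ s) h
    have := congrArg φ (h1.symm)
    rw [this, ← LinearMap.comp_apply, hφ, LinearMap.id_apply]
  have hAone : Amat T c z pp = 1 := by
    ext r s
    rw [Amat, Matrix.of_apply, hLz, hdotφ, hφw]
    simp [Matrix.one_apply, Pi.single_apply, eq_comm]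
  refine ⟨z, k, pp, hindep, ?_⟩
  rw [hAone]
  simp

end good

section main
variable {n q κ : ℕ}

private lemma key (hκ : 0 < κ) (T : Fin κ → ((Fin n → ℝ) →ₗ[ℝ] (Fin q → ℝ)))
    (hrank : ∀ a : Fin κ → ℝ, a ≠ 0 →
      2 * κ ≤ finrank ℝ (LinearMap.range (∑ i, a i • T i))) :
    ∃ x y : Fin n → ℝ, LinearIndependent ℝ
      (Sum.elim (fun i : Fin κ => T i x) (fun i : Fin κ => T i y)) := by
  classical
  -- rank of Lmap
  have hrankL : ∀ c : Fin κ ⊕ Fin κ → ℝ, c ≠ 0 →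
      2 * κ ≤ finrank ℝ (LinearMap.range (Lmap T c)) := by
    intro c hc
    obtain ⟨j, hj⟩ := Function.ne_iff.mp hc
    have key : ∀ (a : Fin κ → ℝ), a ≠ 0 →
        (∃ g : (Fin n → ℝ) →ₗ[ℝ] EE n, (Lmap T c).comp g = ∑ i, a i • T i) →
        2 * κ ≤ finrank ℝ (LinearMap.range (Lmap T c)) := by
      rintro a ha ⟨g, hg⟩
      have h1 : LinearMap.range (∑ i, a i • T i) ≤ LinearMap.range (Lmap T c) := by
        rw [← hg]
        exact LinearMap.range_comp_le_range _ _
      exact le_trans (hrank a ha) (Submodule.finrank_mono h1)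
    cases j with
    | inl i₀ =>
        refine key (fun i => c (Sum.inl i)) (fun h => hj (congrFun h i₀)) ?_
        refine ⟨LinearMap.inl ℝ _ _, ?_⟩
        refine LinearMap.ext fun x => ?_
        simp only [LinearMap.comp_apply, LinearMap.inl_apply, LinearMap.sum_apply,
          LinearMap.add_apply, LinearMap.smul_apply, Lmap, Fintype.sum_sum_type, Smap,
          Sum.elim_inl, Sum.elim_inr, LinearMap.fst_apply, LinearMap.snd_apply, map_zero,
          smul_zero, Finset.sum_const_zero, add_zero]
    | inr i₀ =>
        refine key (fun i => c (Sum.inr i)) (fun h => hj (congrFun h i₀)) ?_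
        refine ⟨LinearMap.inr ℝ _ _, ?_⟩
        refine LinearMap.ext fun x => ?_
        simp only [LinearMap.comp_apply, LinearMap.inr_apply, LinearMap.sum_apply,
          LinearMap.add_apply, LinearMap.smul_apply, Lmap, Fintype.sum_sum_type, Smap,
          Sum.elim_inl, Sum.elim_inr, LinearMap.fst_apply, LinearMap.snd_apply, map_zero,
          smul_zero, Finset.sum_const_zero, zero_add]
  -- dimension facts
  have h2κn : 2 * κ ≤ n := by
    have h1 := hrank (Pi.single (⟨0, hκ⟩ : Fin κ) (1:ℝ)) (by
      intro h
      have := congrFun h ⟨0, hκ⟩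
      simp [Pi.single_apply] at this)
    have h2 : finrank ℝ (LinearMap.range (∑ i, (Pi.single (⟨0, hκ⟩ : Fin κ) (1:ℝ) : Fin κ → ℝ) i • T i)) ≤
        finrank ℝ (Fin n → ℝ) := (LinearMap.finrank_range_le _).trans (le_of_eq rfl)
    have h3 : finrank ℝ (Fin n → ℝ) = n := by simp [Module.finrank_pi]
    omega
  set m := 2 * n - 2 * κ with hm
  have hEdim : finrank ℝ (EE n) = 2 * κ + m := by
    have : finrank ℝ (EE n) = n + n := by
      rw [Module.finrank_prod]
      simp [Module.finrank_pi]
    omega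
  -- suffices to find a point avoiding all kernels
  suffices hz : ∃ e : EE n, ∀ c : Fin κ ⊕ Fin κ → ℝ, c ≠ 0 → Lmap T c e ≠ 0 by
    obtain ⟨⟨x, y⟩, he⟩ := hz
    refine ⟨x, y, ?_⟩
    rw [Fintype.linearIndependent_iff]
    intro g hg
    have hLg : Lmap T g (x, y) = 0 := by
      have h1 : Lmap T g (x, y) = ∑ j, g j •
          Sum.elim (fun i : Fin κ => T i x) (fun i : Fin κ => T i y) j := by
        simp only [Lmap, LinearMap.sum_apply, LinearMap.smul_apply]
        refine Finset.sum_congr rfl fun j _ => ?_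
        cases j <;> rfl
      rw [h1, hg]
    intro i
    by_contra hgi
    exact he g (fun h => hgi (congrFun h i)) hLg
  -- countable dense set of data
  obtain ⟨s, hsc, hsd⟩ := TopologicalSpace.exists_countable_dense
    ((Fin κ ⊕ Fin κ → EE n) × (Fin m → EE n) × (Fin κ ⊕ Fin κ → VV q))
  set BigCover : Set (EE n) := ⋃ (i : Fin κ ⊕ Fin κ), ⋃ (ω ∈ s),
    Set.range (Psi T i ω.1 ω.2.1 ω.2.2) with hBC
  have hdom : ∀ i : Fin κ ⊕ Fin κ,
      finrank ℝ (({j : Fin κ ⊕ Fin κ // j ≠ i} → ℝ) × (Fin m → ℝ)) = 2 * n - 1 := by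
    intro i
    rw [Module.finrank_prod, Module.finrank_pi, Module.finrank_pi]
    have h1 : Fintype.card {j : Fin κ ⊕ Fin κ // j ≠ i} = 2 * κ - 1 := by
      have h2 := Fintype.card_subtype_compl (fun j : Fin κ ⊕ Fin κ => j = i)
      have h3 : Fintype.card {j : Fin κ ⊕ Fin κ // j = i} = 1 := Fintype.card_subtype_eq i
      have h4 : Fintype.card (Fin κ ⊕ Fin κ) = 2 * κ := by simp [Fintype.card_sum, two_mul]
      have h5 : Fintype.card {j : Fin κ ⊕ Fin κ // j ≠ i} =
          Fintype.card {j : Fin κ ⊕ Fin κ // ¬ j = i} := rfl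
      omega
    rw [h1, Fintype.card_fin]
    omega
  have hpiece : ∀ (i : Fin κ ⊕ Fin κ) (ω : (Fin κ ⊕ Fin κ → EE n) × (Fin m → EE n) ×
      (Fin κ ⊕ Fin κ → VV q)), dimH (Set.range (Psi T i ω.1 ω.2.1 ω.2.2)) ≤
        ((2 * n - 1 : ℕ) : ℝ≥0∞) := by
    intro i ω
    have h := (psi_contDiff T i ω.1 ω.2.1 ω.2.2).dimH_range_le
    rwa [hdom i] at h
  have hBCdim : dimH BigCover ≤ ((2 * n - 1 : ℕ) : ℝ≥0∞) := by
    rw [hBC, dimH_iUnion]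
    refine iSup_le fun i => ?_
    rw [dimH_bUnion hsc]
    exact iSup₂_le fun ω _ => hpiece i ω
  have hlt : dimH BigCover < finrank ℝ (EE n) := by
    refine lt_of_le_of_lt hBCdim ?_
    rw [hEdim]
    have hnum : (2 * n - 1) < 2 * κ + m := by omega
    exact_mod_cast hnum
  obtain ⟨e, he⟩ := (dense_compl_of_dimH_lt_finrank hlt).nonempty
  refine ⟨e, fun c hc h0 => he ?_⟩
  obtain ⟨j0, hj0⟩ := Function.ne_iff.mp hc
  have hj0' : c j0 ≠ 0 := hj0
  set c' := (c j0)⁻¹ • c with hc'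
  have hc'j : c' j0 = 1 := by
    simp only [hc', Pi.smul_apply, smul_eq_mul]
    exact inv_mul_cancel₀ hj0'
  have hc'0 : c' ≠ 0 := fun h => by rw [h] at hc'j; simp at hc'j
  have hL' : Lmap T c' e = 0 := by
    have hsc' : Lmap T c' = (c j0)⁻¹ • Lmap T c := by
      unfold Lmap
      rw [Finset.smul_sum]
      exact Finset.sum_congr rfl fun j _ => by
        simp only [hc', Pi.smul_apply, smul_eq_mul, smul_smul]
    rw [hsc']
    simp [h0]
  obtain ⟨z, k, pp, hind, hdet⟩ := exists_good T hEdim c' (hrankL c' hc'0)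
  have hO1 : IsOpen {ω : (Fin κ ⊕ Fin κ → EE n) × (Fin m → EE n) ×
      (Fin κ ⊕ Fin κ → VV q) | LinearIndependent ℝ (Sum.elim ω.1 ω.2.1)} := by
    have hcont : Continuous fun ω : (Fin κ ⊕ Fin κ → EE n) × (Fin m → EE n) ×
        (Fin κ ⊕ Fin κ → VV q) => Sum.elim ω.1 ω.2.1 := by
      apply continuous_pi
      intro j
      cases j with
      | inl a => exact (continuous_apply a).comp continuous_fst
      | inr a => exact (continuous_apply a).comp (continuous_fst.comp continuous_snd)
    exact isOpen_setOf_linearIndependent.preimage hcont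
  have hO2 : IsOpen {ω : (Fin κ ⊕ Fin κ → EE n) × (Fin m → EE n) ×
      (Fin κ ⊕ Fin κ → VV q) | (Amat T c' ω.1 ω.2.2).det ≠ 0} := by
    have hcont : Continuous fun ω : (Fin κ ⊕ Fin κ → EE n) × (Fin m → EE n) ×
        (Fin κ ⊕ Fin κ → VV q) => (Amat T c' ω.1 ω.2.2).det := by
      apply Continuous.matrix_det
      apply continuous_matrix
      intro r sidx
      simp only [Amat, Matrix.of_apply, dotProduct]
      apply continuous_finset_sum
      intro tt _
      exact ((continuous_apply tt).comp ((continuous_apply r).comp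
          (continuous_snd.comp continuous_snd))).mul
        ((continuous_apply tt).comp ((Lmap T c').continuous_of_finiteDimensional.comp
          ((continuous_apply sidx).comp continuous_fst)))
    exact IsOpen.preimage hcont isOpen_compl_singleton
  obtain ⟨ω, hωs, hωO⟩ := hsd.exists_mem_open (hO1.inter hO2) ⟨(z, k, pp), hind, hdet⟩
  have hspan : Submodule.span ℝ (Set.range (Sum.elim ω.1 ω.2.1)) = ⊤ := by
    refine hωO.1.span_eq_top_of_card_eq_finrank' ?_
    rw [hEdim]
    simp only [Fintype.card_sum, Fintype.card_fin]
    omega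
  have hker := ker_subset_range_psi T j0 ω.1 ω.2.1 ω.2.2 c' hc'j hωO.2 hspan
  have hmem : e ∈ Set.range (Psi T j0 ω.1 ω.2.1 ω.2.2) :=
    hker (LinearMap.mem_ker.mpr hL')
  exact Set.mem_iUnion.mpr ⟨j0, Set.mem_iUnion₂.mpr ⟨ω, hωs, hmem⟩⟩

end main

/-- If every nonzero linear combination of `T₁,…,T_κ` has rank at least `μ ≥ 2κ`,
then there are `x, y` with `T₁x,…,T_κx,T₁y,…,T_κy` linearly independent. -/
theorem stmt_6 {V W : Type*} [AddCommGroup V] [Module ℝ V] [AddCommGroup W] [Module ℝ W]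
    [FiniteDimensional ℝ V] [FiniteDimensional ℝ W]
    {κ μ : ℕ} (T : Fin κ → (V →ₗ[ℝ] W))
    (hrank : ∀ a : Fin κ → ℝ, a ≠ 0 →
      μ ≤ Module.finrank ℝ (LinearMap.range (∑ i, a i • T i)))
    (hμ : 2 * κ ≤ μ) :
    ∃ x y : V, LinearIndependent ℝ
      (Sum.elim (fun i : Fin κ => T i x) (fun i : Fin κ => T i y)) := by
  rcases Nat.eq_zero_or_pos κ with hκ | hκ
  · subst hκ
    exact ⟨0, 0, linearIndependent_empty_type⟩
  · set e := (Module.finBasis ℝ V).equivFun with he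
    set f := (Module.finBasis ℝ W).equivFun with hf
    set T' : Fin κ → ((Fin (finrank ℝ V) → ℝ) →ₗ[ℝ] (Fin (finrank ℝ W) → ℝ)) :=
      fun i => f.toLinearMap ∘ₗ (T i) ∘ₗ e.symm.toLinearMap with hT'
    have hsum : ∀ a : Fin κ → ℝ, (∑ i, a i • T' i) =
        f.toLinearMap ∘ₗ (∑ i, a i • T i) ∘ₗ e.symm.toLinearMap := by
      intro a
      refine LinearMap.ext fun x => ?_
      simp only [LinearMap.sum_apply, LinearMap.smul_apply, LinearMap.comp_apply, map_sum,
        _root_.map_smul, hT', LinearEquiv.coe_coe]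
    have hrank' : ∀ a : Fin κ → ℝ, a ≠ 0 →
        2 * κ ≤ finrank ℝ (LinearMap.range (∑ i, a i • T' i)) := by
      intro a ha
      rw [hsum a]
      have h1 : LinearMap.range (f.toLinearMap ∘ₗ (∑ i, a i • T i) ∘ₗ e.symm.toLinearMap) =
          Submodule.map f.toLinearMap
            (LinearMap.range ((∑ i, a i • T i) ∘ₗ e.symm.toLinearMap)) :=
        LinearMap.range_comp _ _
      have h2 : LinearMap.range ((∑ i, a i • T i) ∘ₗ e.symm.toLinearMap) =
          LinearMap.range (∑ i, a i • T i) :=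
        LinearMap.range_comp_of_range_eq_top _ (LinearEquiv.range e.symm)
      rw [h1, h2, LinearEquiv.finrank_map_eq f]
      exact le_trans hμ (hrank a ha)
    obtain ⟨x', y', hind⟩ := key hκ T' hrank'
    refine ⟨e.symm x', e.symm y', ?_⟩
    have hcomp : (Sum.elim (fun i : Fin κ => T' i x') (fun i : Fin κ => T' i y')) =
        ⇑f.toLinearMap ∘ (Sum.elim (fun i : Fin κ => T i (e.symm x'))
          (fun i : Fin κ => T i (e.symm y'))) := by
      funext j
      cases j <;> simp [hT']
    rw [hcomp] at hind
    exact LinearIndependent.of_comp f.toLinearMap hind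
end

section
/- Let {J₁,…,J_κ} be a Clifford family on a finite-dimensional real inner product space V of dimension n. If a linear combination S := Σ_{j<k} a_{jk} J_jJ_k has some nonzero coefficient a_{jk}, then Rank(S) ≥ n/2. -/
open RealInnerProductSpace

/-- A nonzero combination `S = Σ_{j<k} a_{jk} J_jJ_k` of products from a Clifford
family has rank at least `n/2`, i.e. `n ≤ 2 rank S`. -/
theorem stmt_10 {V : Type*} [NormedAddCommGroup V] [InnerProductSpace ℝ V]
    [FiniteDimensional ℝ V]
    {κ : ℕ} (J : Fin κ → (V →ₗ[ℝ] V))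
    (hiso : ∀ i, ∀ x y : V, ⟪J i x, J i y⟫ = ⟪x, y⟫)
    (hsq : ∀ i, J i ∘ₗ J i = -LinearMap.id)
    (hanti : ∀ i j, i ≠ j → J i ∘ₗ J j + J j ∘ₗ J i = 0)
    (a : Fin κ → Fin κ → ℝ) (hne : ∃ j k, j < k ∧ a j k ≠ 0) :
    Module.finrank ℝ V ≤ 2 * Module.finrank ℝ
      (LinearMap.range (∑ j, ∑ k, if j < k then a j k • (J j ∘ₗ J k) else 0)) := by
  obtain ⟨j₀, k₀, hlt, ha⟩ := hne
  -- ring-style relations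
  have h2 : ∀ i, J i * J i = -1 := fun i => hsq i
  have hA : ∀ i j, i ≠ j → J i * J j = -(J j * J i) := by
    intro i j hij
    have := hanti i j hij
    have : (J i ∘ₗ J j) = -(J j ∘ₗ J i) := by linear_combination (norm := module) this
    exact this
  have hsq' : ∀ i (x : V), J i (J i x) = -x := by
    intro i x
    have := congrArg (fun f => f x) (hsq i)
    simpa using this
  have hanti' : ∀ i j, i ≠ j → ∀ x : V, J i (J j x) + J j (J i x) = 0 := by
    intro i j hij x
    have := congrArg (fun f => f x) (hanti i j hij)
    simpa using this
  have hJinj : ∀ i, Function.Injective (J i) := by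
    intro i x y hxy
    have := congrArg (J i) hxy
    rw [hsq' i x, hsq' i y] at this
    exact neg_injective this
  set S : V →ₗ[ℝ] V := ∑ j, ∑ k, if j < k then a j k • (J j ∘ₗ J k) else 0 with hS
  set b : Fin κ → ℝ := fun k => if j₀ < k then a j₀ k else if k < j₀ then -(a k j₀) else 0
    with hb
  set L : V →ₗ[ℝ] V := ∑ k, b k • J k with hL
  have hS' : S = ∑ j, ∑ k, if j < k then a j k • (J j * J k) else 0 := hS
  have c1 : ∀ k, j₀ ≠ k → J j₀ * (J j₀ * J k) * J j₀ = J j₀ * J k := by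
    intro k hk
    calc J j₀ * (J j₀ * J k) * J j₀ = (J j₀ * J j₀) * (J k * J j₀) := by
          simp only [mul_assoc]
      _ = (-1) * (J k * J j₀) := by rw [h2]
      _ = -(J k * J j₀) := by rw [neg_one_mul]
      _ = J j₀ * J k := by rw [hA k j₀ (Ne.symm hk), neg_neg]
  have c2 : ∀ j, J j₀ * (J j * J j₀) * J j₀ = -(J j₀ * J j) := by
    intro j
    calc J j₀ * (J j * J j₀) * J j₀ = (J j₀ * J j) * (J j₀ * J j₀) := by
          simp only [mul_assoc]
      _ = (J j₀ * J j) * (-1) := by rw [h2]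
      _ = -(J j₀ * J j) := by rw [mul_neg_one]
  have c3 : ∀ j k, j ≠ j₀ → k ≠ j₀ → J j₀ * (J j * J k) * J j₀ = -(J j * J k) := by
    intro j k hj hk
    calc J j₀ * (J j * J k) * J j₀ = (J j₀ * J j) * (J k * J j₀) := by
          simp only [mul_assoc]
      _ = (-(J j * J j₀)) * (-(J j₀ * J k)) := by rw [hA j₀ j (Ne.symm hj), hA k j₀ hk]
      _ = (J j * J j₀) * (J j₀ * J k) := by rw [neg_mul_neg]
      _ = J j * ((J j₀ * J j₀) * J k) := by simp only [mul_assoc]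
      _ = J j * ((-1) * J k) := by rw [h2]
      _ = -(J j * J k) := by rw [neg_one_mul, mul_neg]
  have key : S + J j₀ * S * J j₀ = (2:ℝ) • (J j₀ * L) := by
    have conj : J j₀ * S * J j₀
        = ∑ j, ∑ k, (if j < k then a j k • (J j₀ * (J j * J k) * J j₀) else 0) := by
      rw [hS']
      simp only [Finset.mul_sum, Finset.sum_mul, smul_mul_assoc, mul_smul_comm,
        ite_mul, mul_ite, mul_zero, zero_mul, mul_assoc]
    have rhs' : (2:ℝ) • (J j₀ * L) = ∑ k, (2 * b k) • (J j₀ * J k) := by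
      rw [hL, Finset.mul_sum, Finset.smul_sum]
      refine Finset.sum_congr rfl fun k _ => ?_
      rw [mul_smul_comm, smul_smul]
    have termwise : ∀ j k : Fin κ,
        ((if j < k then a j k • (J j * J k) else 0)
          + (if j < k then a j k • (J j₀ * (J j * J k) * J j₀) else 0))
        = (if j = j₀ ∧ j₀ < k then (2 * a j₀ k) • (J j₀ * J k) else 0)
          + (if k = j₀ ∧ j < j₀ then (-(2 * a j j₀)) • (J j₀ * J j) else 0) := by
      intro j k
      by_cases hjk : j < k
      · by_cases hj : j = j₀
        · subst hj
          have hk : j ≠ k := ne_of_lt hjk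
          rw [if_pos hjk, if_pos hjk, c1 k hk, if_pos ⟨rfl, hjk⟩,
            if_neg (by rintro ⟨rfl, h⟩; exact absurd hjk (lt_irrefl _))]
          rw [add_zero, ← add_smul]
          congr 1; ring
        · by_cases hk : k = j₀
          · subst hk
            rw [if_pos hjk, if_pos hjk, c2 j, if_neg (by rintro ⟨h, _⟩; exact hj h),
              if_pos ⟨rfl, hjk⟩]
            rw [hA j k (ne_of_lt hjk), zero_add, smul_neg, ← neg_add,
              ← add_smul, ← neg_smul]
            congr 1
            ring
          · rw [if_pos hjk, if_pos hjk, c3 j k hj hk,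
              if_neg (by rintro ⟨h, _⟩; exact hj h),
              if_neg (by rintro ⟨h, _⟩; exact hk h), smul_neg, add_neg_cancel, add_zero]
      · rw [if_neg hjk, if_neg hjk,
          if_neg (by rintro ⟨rfl, h⟩; exact hjk h),
          if_neg (by rintro ⟨rfl, h⟩; exact hjk h)]
    calc S + J j₀ * S * J j₀
        = ∑ j, ∑ k, ((if j < k then a j k • (J j * J k) else 0)
            + (if j < k then a j k • (J j₀ * (J j * J k) * J j₀) else 0)) := by
          rw [conj, hS', ← Finset.sum_add_distrib]
          exact Finset.sum_congr rfl fun j _ => (Finset.sum_add_distrib).symm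
      _ = ∑ j, ∑ k, ((if j = j₀ ∧ j₀ < k then (2 * a j₀ k) • (J j₀ * J k) else 0)
            + (if k = j₀ ∧ j < j₀ then (-(2 * a j j₀)) • (J j₀ * J j) else 0)) :=
          Finset.sum_congr rfl fun j _ => Finset.sum_congr rfl fun k _ => termwise j k
      _ = (∑ j, ∑ k, if j = j₀ ∧ j₀ < k then (2 * a j₀ k) • (J j₀ * J k) else 0)
            + (∑ j, ∑ k, if k = j₀ ∧ j < j₀ then (-(2 * a j j₀)) • (J j₀ * J j) else 0) := by
          rw [← Finset.sum_add_distrib]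
          exact Finset.sum_congr rfl fun j _ => Finset.sum_add_distrib
      _ = (∑ k, if j₀ < k then (2 * a j₀ k) • (J j₀ * J k) else 0)
            + (∑ j, if j < j₀ then (-(2 * a j j₀)) • (J j₀ * J j) else 0) := by
          congr 1
          · rw [Finset.sum_eq_single j₀]
            · exact Finset.sum_congr rfl fun k _ => by simp
            · intro j _ hj
              exact Finset.sum_eq_zero fun k _ => if_neg (by rintro ⟨h, _⟩; exact hj h)
            · simp
          · refine Finset.sum_congr rfl fun j _ => ?_
            rw [Finset.sum_eq_single j₀]
            · simp
            · intro k _ hk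
              exact if_neg (by rintro ⟨h, _⟩; exact hk h)
            · simp
      _ = ∑ k, (2 * b k) • (J j₀ * J k) := by
          rw [← Finset.sum_add_distrib]
          refine Finset.sum_congr rfl fun k _ => ?_
          rcases lt_trichotomy j₀ k with h | h | h
          · rw [if_pos h, if_neg (not_lt_of_gt h), add_zero, hb]
            simp [h]
          · subst h
            simp [hb]
          · rw [if_neg (not_lt_of_gt h), if_pos h, zero_add]
            have hbk : b k = -(a k j₀) := by simp [hb, h, not_lt_of_gt h]
            rw [hbk]
            congr 1
            ring
      _ = (2:ℝ) • (J j₀ * L) := rhs'.symm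
  -- orthogonality of the family applied to a vector
  have horth : ∀ j k, j ≠ k → ∀ x : V, ⟪J j x, J k x⟫ = 0 := by
    intro j k hjk x
    have h1 : ⟪J j x, J k x⟫ = -⟪x, J j (J k x)⟫ := by
      have hrepr : J k x = J j (-(J j (J k x))) := by
        rw [map_neg, hsq' j, neg_neg]
      calc ⟪J j x, J k x⟫ = ⟪J j x, J j (-(J j (J k x)))⟫ := by rw [← hrepr]
        _ = ⟪x, -(J j (J k x))⟫ := hiso j _ _
        _ = -⟪x, J j (J k x)⟫ := by rw [inner_neg_right]
    have h2' : ⟪J j x, J k x⟫ = -⟪x, J k (J j x)⟫ := by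
      have hrepr : J j x = J k (-(J k (J j x))) := by
        rw [map_neg, hsq' k, neg_neg]
      calc ⟪J j x, J k x⟫ = ⟪J k x, J j x⟫ := real_inner_comm _ _
        _ = ⟪J k x, J k (-(J k (J j x)))⟫ := by rw [← hrepr]
        _ = ⟪x, -(J k (J j x))⟫ := hiso k _ _
        _ = -⟪x, J k (J j x)⟫ := by rw [inner_neg_right]
    have hz : ⟪x, J j (J k x)⟫ + ⟪x, J k (J j x)⟫ = 0 := by
      rw [← inner_add_right, hanti' j k hjk x, inner_zero_right]
    linarith
  -- L is injective
  have hLinj : Function.Injective L := by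
    have hnorm : ∀ x : V, ⟪L x, L x⟫ = (∑ k, b k ^ 2) * ⟪x, x⟫ := by
      intro x
      have : L x = ∑ k, b k • J k x := by
        rw [hL]; simp [LinearMap.sum_apply]
      rw [this, sum_inner]
      have : ∀ j ∈ Finset.univ, ⟪b j • J j x, ∑ k, b k • J k x⟫ = b j ^ 2 * ⟪x, x⟫ := by
        intro j _
        rw [inner_sum]
        rw [Finset.sum_eq_single j]
        · rw [real_inner_smul_left, real_inner_smul_right, hiso j]; ring
        · intro k _ hkj
          rw [real_inner_smul_left, real_inner_smul_right, horth j k (Ne.symm hkj) x]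
          ring
        · simp
      rw [Finset.sum_congr rfl this, ← Finset.sum_mul]
    have hbpos : 0 < ∑ k, b k ^ 2 := by
      have : b k₀ ^ 2 > 0 := by
        have : b k₀ = a j₀ k₀ := by rw [hb]; simp [hlt]
        rw [this]; positivity
      exact lt_of_lt_of_le this (Finset.single_le_sum (fun i _ => sq_nonneg (b i))
        (Finset.mem_univ k₀))
    rw [injective_iff_map_eq_zero]
    intro x hx
    have := hnorm x
    rw [hx, inner_zero_left] at this
    have hxx : ⟪x, x⟫ = 0 := by
      rcases mul_eq_zero.1 this.symm with h | h
      · exact absurd h (ne_of_gt hbpos)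
      · exact h
    exact inner_self_eq_zero.1 hxx
  have hMinj : Function.Injective (S + J j₀ * S * J j₀) := by
    rw [key]
    intro x y hxy
    have h1 : (2:ℝ) • (J j₀ (L x)) = (2:ℝ) • (J j₀ (L y)) := by
      simpa [LinearMap.smul_apply, Module.End.mul_apply] using hxy
    exact hLinj (hJinj j₀ (smul_right_injective V two_ne_zero h1))
  have hrankV : Module.finrank ℝ V
      = Module.finrank ℝ (LinearMap.range (S + J j₀ * S * J j₀)) :=
    (LinearMap.finrank_range_of_inj hMinj).symm
  have hsub : LinearMap.range (S + J j₀ * S * J j₀)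
      ≤ LinearMap.range S ⊔ LinearMap.range (J j₀ * S * J j₀) := by
    rintro y ⟨x, rfl⟩
    rw [LinearMap.add_apply]
    exact Submodule.add_mem _ (Submodule.mem_sup_left ⟨x, rfl⟩)
      (Submodule.mem_sup_right ⟨x, rfl⟩)
  have hconjrank : Module.finrank ℝ (LinearMap.range (J j₀ * S * J j₀))
      ≤ Module.finrank ℝ (LinearMap.range S) := by
    have e1 : LinearMap.range (J j₀ * S * J j₀)
        = (LinearMap.range (S * J j₀)).map (J j₀) := by
      rw [mul_assoc]
      exact LinearMap.range_comp _ _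
    rw [e1]
    exact le_trans (Submodule.finrank_map_le _ _)
      (Submodule.finrank_mono (LinearMap.range_comp_le_range _ _))
  calc Module.finrank ℝ V
      = Module.finrank ℝ (LinearMap.range (S + J j₀ * S * J j₀)) := hrankV
    _ ≤ Module.finrank ℝ
        ((LinearMap.range S ⊔ LinearMap.range (J j₀ * S * J j₀) : Submodule ℝ V)) :=
        Submodule.finrank_mono hsub
    _ ≤ Module.finrank ℝ (LinearMap.range S)
        + Module.finrank ℝ (LinearMap.range (J j₀ * S * J j₀)) :=
        Submodule.finrank_add_le_finrank_add_finrank _ _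
    _ ≤ 2 * Module.finrank ℝ (LinearMap.range S) := by omega
end

section
/- Let (V,⟨·,·⟩) be a real inner product space, J an Hermitian almost complex structure, c₀, c₁ real constants, and R := c₀R₀ + c₁R_J. Then for any unit vector x, the complex Jacobi operator 𝒥_R(π_x) := 𝒥_R(x) + 𝒥_R(Jx) satisfies: 𝒥_R(π_x)y = (c₀ + 3c₁)y for y ∈ Span{x, Jx}, and 𝒥_R(π_x)y = 2c₀y for y ⟂ Span{x, Jx}. In particular J commutes with 𝒥_R(π_x) and the eigenvalues are independent of x. -/
open RealInnerProductSpace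

/-- For `R = c₀R₀ + c₁R_J` with `J` an Hermitian almost complex structure, the
complex Jacobi operator `𝒥_R(π_x) = 𝒥_R(x) + 𝒥_R(Jx)` (characterized by
`⟪𝒥_R(π_x)y, z⟫ = R(y,x,x,z) + R(y,Jx,Jx,z)`) acts as `(c₀+3c₁)·id` on
`Span{x,Jx}` and as `2c₀·id` on its orthogonal complement; moreover it commutes
with `J`. -/
theorem stmt_15 {V : Type*} [NormedAddCommGroup V] [InnerProductSpace ℝ V]
    (J : V →ₗ[ℝ] V)
    (hJiso : ∀ x y : V, ⟪J x, J y⟫ = ⟪x, y⟫) (hJ2 : J ∘ₗ J = -LinearMap.id)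
    (c₀ c₁ : ℝ) (R : V → V → V → V → ℝ)
    (hR : ∀ x y z t : V, R x y z t =
      c₀ * (⟪x, t⟫ * ⟪y, z⟫ - ⟪x, z⟫ * ⟪y, t⟫) +
      c₁ * (⟪x, J t⟫ * ⟪y, J z⟫ - ⟪x, J z⟫ * ⟪y, J t⟫ - 2 * ⟪x, J y⟫ * ⟪z, J t⟫))
    (x : V) (hx : ‖x‖ = 1) :
    (∀ y ∈ Submodule.span ℝ ({x, J x} : Set V), ∀ z : V,
      R y x x z + R y (J x) (J x) z = ⟪((c₀ + 3 * c₁) • y : V), z⟫) ∧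
    (∀ y : V, ⟪y, x⟫ = 0 → ⟪y, J x⟫ = 0 → ∀ z : V,
      R y x x z + R y (J x) (J x) z = ⟪((2 * c₀) • y : V), z⟫) ∧
    (∀ y z : V, R (J y) x x z + R (J y) (J x) (J x) z
      = -(R y x x (J z) + R y (J x) (J x) (J z))) := by
  have hJJ : ∀ a : V, J (J a) = -a := fun a => by
    have := congrArg (fun f : V →ₗ[ℝ] V => f a) hJ2
    simpa using this
  have hskew : ∀ a b : V, ⟪J a, b⟫ = -⟪a, J b⟫ := fun a b => by
    have h := hJiso a (J b)
    rw [hJJ, inner_neg_right] at h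
    linarith
  have hxx : ⟪x, x⟫ = 1 := by
    have := real_inner_self_eq_norm_mul_norm x
    rw [hx] at this; simpa using this
  have hJxx : ⟪J x, x⟫ = 0 := by
    have h1 := hskew x x
    have h2 := real_inner_comm (J x) x
    linarith
  have hxJx : ⟪x, J x⟫ = 0 := by have h := real_inner_comm x (J x); linarith
  have key : ∀ y z : V, R y x x z + R y (J x) (J x) z =
      2 * c₀ * ⟪y, z⟫ + (3 * c₁ - c₀) * (⟪y, x⟫ * ⟪x, z⟫ + ⟪y, J x⟫ * ⟪J x, z⟫) := by
    intro y z
    have h1 : ⟪x, J z⟫ = -⟪J x, z⟫ := by have := hskew x z; linarith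
    have h2 : ⟪J x, J z⟫ = ⟪x, z⟫ := hJiso x z
    have h3 : ⟪J x, J x⟫ = 1 := by rw [hJiso]; exact hxx
    simp only [hR, hJJ, inner_neg_right, inner_neg_left, h1, h2, h3, hxJx, hJxx, hxx]
    ring
  refine ⟨?_, ?_, ?_⟩
  · intro y hy z
    have hspan : ⟪y, x⟫ * ⟪x, z⟫ + ⟪y, J x⟫ * ⟪J x, z⟫ = ⟪y, z⟫ := by
      induction hy using Submodule.span_induction with
      | mem a ha =>
        simp only [Set.mem_insert_iff, Set.mem_singleton_iff] at ha
        rcases ha with rfl | rfl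
        · rw [hxx, hxJx]; ring
        · rw [hJxx, hJiso, hxx]; ring
      | zero => simp
      | add a b _ _ ha hb => simp only [inner_add_left]; linarith
      | smul r a _ ha => simp only [real_inner_smul_left]; rw [← ha]; ring
    rw [key, real_inner_smul_left, ← hspan]
    ring
  · intro y h1 h2 z
    rw [key, h1, h2, real_inner_smul_left]
    ring
  · intro y z
    rw [key, key]
    have a1 : ⟪J y, z⟫ = -⟪y, J z⟫ := hskew y z
    have a2 : ⟪J y, x⟫ = -⟪y, J x⟫ := hskew y x
    have a3 : ⟪J y, J x⟫ = ⟪y, x⟫ := hJiso y x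
    have a4 : ⟪x, J z⟫ = -⟪J x, z⟫ := by have := hskew x z; linarith
    have a5 : ⟪J x, J z⟫ = ⟪x, z⟫ := hJiso x z
    rw [a1, a2, a3, a4, a5]
    ring
end

section
/- Let {J₁,J₂,J₃} be a quaternion structure on (V,⟨·,·⟩), i.e., a Clifford family with J₁J₂ = J₃, let c₀,c₁,c₂,c₃ ∈ ℝ and R := c₀R₀ + c₁R_{J₁} + c₂R_{J₂} + c₃R_{J₃}. Then for any unit vector x, writing π_x for Span{x, J₁x}, the complex Jacobi operator 𝒥_R(π_x) = 𝒥_R(x) + 𝒥_R(J₁x) acts as (c₀+3c₁)·id on Span{x,J₁x}, as (2c₀+3c₂+3c₃)·id on Span{J₂x,J₃x}, and as 2c₀·id on the orthogonal complement of Span{x,J₁x,J₂x,J₃x}. -/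
open RealInnerProductSpace

/-- For `R = c₀R₀ + c₁R_{J₁} + c₂R_{J₂} + c₃R_{J₃}` with `{J₁,J₂,J₃}` a
quaternion structure, the complex Jacobi operator of `π_x = Span{x,J₁x}`
(characterized by `⟪𝒥_R(π_x)y, z⟫ = R(y,x,x,z) + R(y,J₁x,J₁x,z)`) acts as
`(c₀+3c₁)·id` on `Span{x,J₁x}`, as `(2c₀+3c₂+3c₃)·id` on `Span{J₂x,J₃x}`, and
as `2c₀·id` on the orthogonal complement of `Span{x,J₁x,J₂x,J₃x}`. -/
theorem stmt_16 {V : Type*} [NormedAddCommGroup V] [InnerProductSpace ℝ V]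
    (J₁ J₂ J₃ : V →ₗ[ℝ] V)
    (hiso₁ : ∀ x y : V, ⟪J₁ x, J₁ y⟫ = ⟪x, y⟫)
    (hiso₂ : ∀ x y : V, ⟪J₂ x, J₂ y⟫ = ⟪x, y⟫)
    (hiso₃ : ∀ x y : V, ⟪J₃ x, J₃ y⟫ = ⟪x, y⟫)
    (hsq₁ : J₁ ∘ₗ J₁ = -LinearMap.id) (hsq₂ : J₂ ∘ₗ J₂ = -LinearMap.id)
    (hsq₃ : J₃ ∘ₗ J₃ = -LinearMap.id)
    (hanti₁₂ : J₁ ∘ₗ J₂ + J₂ ∘ₗ J₁ = 0) (hanti₁₃ : J₁ ∘ₗ J₃ + J₃ ∘ₗ J₁ = 0)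
    (hanti₂₃ : J₂ ∘ₗ J₃ + J₃ ∘ₗ J₂ = 0)
    (hquat : J₁ ∘ₗ J₂ = J₃)
    (c₀ c₁ c₂ c₃ : ℝ) (R : V → V → V → V → ℝ)
    (hR : ∀ x y z t : V, R x y z t =
      c₀ * (⟪x, t⟫ * ⟪y, z⟫ - ⟪x, z⟫ * ⟪y, t⟫) +
      c₁ * (⟪x, J₁ t⟫ * ⟪y, J₁ z⟫ - ⟪x, J₁ z⟫ * ⟪y, J₁ t⟫ - 2 * ⟪x, J₁ y⟫ * ⟪z, J₁ t⟫) +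
      c₂ * (⟪x, J₂ t⟫ * ⟪y, J₂ z⟫ - ⟪x, J₂ z⟫ * ⟪y, J₂ t⟫ - 2 * ⟪x, J₂ y⟫ * ⟪z, J₂ t⟫) +
      c₃ * (⟪x, J₃ t⟫ * ⟪y, J₃ z⟫ - ⟪x, J₃ z⟫ * ⟪y, J₃ t⟫ - 2 * ⟪x, J₃ y⟫ * ⟪z, J₃ t⟫))
    (x : V) (hx : ‖x‖ = 1) :
    (∀ y ∈ Submodule.span ℝ ({x, J₁ x} : Set V), ∀ z : V,
      R y x x z + R y (J₁ x) (J₁ x) z = ⟪((c₀ + 3 * c₁) • y : V), z⟫) ∧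
    (∀ y ∈ Submodule.span ℝ ({J₂ x, J₃ x} : Set V), ∀ z : V,
      R y x x z + R y (J₁ x) (J₁ x) z = ⟪((2 * c₀ + 3 * c₂ + 3 * c₃) • y : V), z⟫) ∧
    (∀ y : V, ⟪y, x⟫ = 0 → ⟪y, J₁ x⟫ = 0 → ⟪y, J₂ x⟫ = 0 → ⟪y, J₃ x⟫ = 0 → ∀ z : V,
      R y x x z + R y (J₁ x) (J₁ x) z = ⟪((2 * c₀) • y : V), z⟫) := by
  -- pointwise squares
  have sq₁ : ∀ a : V, J₁ (J₁ a) = -a := fun a => by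
    simpa using LinearMap.congr_fun hsq₁ a
  have sq₂ : ∀ a : V, J₂ (J₂ a) = -a := fun a => by
    simpa using LinearMap.congr_fun hsq₂ a
  have sq₃ : ∀ a : V, J₃ (J₃ a) = -a := fun a => by
    simpa using LinearMap.congr_fun hsq₃ a
  -- skew-symmetry
  have skw₁ : ∀ a b : V, ⟪a, J₁ b⟫ = -⟪J₁ a, b⟫ := fun a b => by
    rw [← hiso₁ a (J₁ b), sq₁ b, inner_neg_right]
  have skw₂ : ∀ a b : V, ⟪a, J₂ b⟫ = -⟪J₂ a, b⟫ := fun a b => by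
    rw [← hiso₂ a (J₂ b), sq₂ b, inner_neg_right]
  have skw₃ : ∀ a b : V, ⟪a, J₃ b⟫ = -⟪J₃ a, b⟫ := fun a b => by
    rw [← hiso₃ a (J₃ b), sq₃ b, inner_neg_right]
  -- composition rules
  have c12 : ∀ a : V, J₁ (J₂ a) = J₃ a := fun a => by
    simpa using LinearMap.congr_fun hquat a
  have c21 : ∀ a : V, J₂ (J₁ a) = -J₃ a := fun a => by
    have := LinearMap.congr_fun hanti₁₂ a
    simp only [LinearMap.add_apply, LinearMap.comp_apply, LinearMap.zero_apply] at this
    rw [c12] at this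
    exact eq_neg_of_add_eq_zero_right this
  have c13 : ∀ a : V, J₁ (J₃ a) = -J₂ a := fun a => by
    rw [← c12 a, sq₁]
  have c31 : ∀ a : V, J₃ (J₁ a) = J₂ a := fun a => by
    have := LinearMap.congr_fun hanti₁₃ a
    simp only [LinearMap.add_apply, LinearMap.comp_apply, LinearMap.zero_apply] at this
    rw [c13] at this
    exact (neg_add_eq_zero.mp this).symm
  have c32 : ∀ a : V, J₃ (J₂ a) = -J₁ a := fun a => by
    rw [← c12 (J₂ a), sq₂, map_neg]
  have c23 : ∀ a : V, J₂ (J₃ a) = J₁ a := fun a => by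
    have := LinearMap.congr_fun hanti₂₃ a
    simp only [LinearMap.add_apply, LinearMap.comp_apply, LinearMap.zero_apply] at this
    rw [c32] at this
    exact add_neg_eq_zero.mp this
  -- orthonormality facts
  have hxx : ⟪x, x⟫ = 1 := by
    rw [real_inner_self_eq_norm_mul_norm, hx]; norm_num
  have o₁ : ⟪J₁ x, x⟫ = 0 := by
    have h := skw₁ x x
    have h2 := real_inner_comm x (J₁ x)
    linarith
  have o₂ : ⟪J₂ x, x⟫ = 0 := by
    have h := skw₂ x x
    have h2 := real_inner_comm x (J₂ x)
    linarith
  have o₃ : ⟪J₃ x, x⟫ = 0 := by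
    have h := skw₃ x x
    have h2 := real_inner_comm x (J₃ x)
    linarith
  have n₁ : ⟪J₁ x, J₁ x⟫ = 1 := by rw [hiso₁]; exact hxx
  have n₂ : ⟪J₂ x, J₂ x⟫ = 1 := by rw [hiso₂]; exact hxx
  have n₃ : ⟪J₃ x, J₃ x⟫ = 1 := by rw [hiso₃]; exact hxx
  have o₁₂ : ⟪J₁ x, J₂ x⟫ = 0 := by
    rw [skw₂, c21, inner_neg_left, neg_neg, o₃]
  have o₁₃ : ⟪J₁ x, J₃ x⟫ = 0 := by
    rw [skw₃, c31, o₂, neg_zero]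
  have o₂₃ : ⟪J₂ x, J₃ x⟫ = 0 := by
    rw [skw₃, c32, inner_neg_left, o₁, neg_zero, neg_zero]
  have o₂₁ : ⟪J₂ x, J₁ x⟫ = 0 := by rw [real_inner_comm]; exact o₁₂
  have o₃₁ : ⟪J₃ x, J₁ x⟫ = 0 := by rw [real_inner_comm]; exact o₁₃
  have o₃₂ : ⟪J₃ x, J₂ x⟫ = 0 := by rw [real_inner_comm]; exact o₂₃
  have ox₁ : ⟪x, J₁ x⟫ = 0 := by rw [real_inner_comm]; exact o₁
  have ox₂ : ⟪x, J₂ x⟫ = 0 := by rw [real_inner_comm]; exact o₂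
  have ox₃ : ⟪x, J₃ x⟫ = 0 := by rw [real_inner_comm]; exact o₃
  -- master formula
  have master : ∀ y z : V, R y x x z + R y (J₁ x) (J₁ x) z =
      2 * c₀ * ⟪y, z⟫
      + (3 * c₁ - c₀) * (⟪y, x⟫ * ⟪x, z⟫ + ⟪y, J₁ x⟫ * ⟪J₁ x, z⟫)
      + (3 * c₂ + 3 * c₃) * (⟪y, J₂ x⟫ * ⟪J₂ x, z⟫ + ⟪y, J₃ x⟫ * ⟪J₃ x, z⟫) := by
    intro y z
    rw [hR, hR]
    simp only [skw₁, skw₂, skw₃, c12, c21, c13, c31, c23, c32, sq₁, sq₂, sq₃,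
      map_neg, inner_neg_left, inner_neg_right, neg_neg,
      hxx, o₁, o₂, o₃, n₁, n₂, n₃, o₁₂, o₁₃, o₂₃, o₂₁, o₃₁, o₃₂]
    ring_nf
  refine ⟨?_, ?_, ?_⟩
  · intro y hy z
    obtain ⟨a, b, rfl⟩ := Submodule.mem_span_pair.mp hy
    rw [master]
    simp only [inner_add_left, real_inner_smul_left, inner_smul_left,
      RCLike.star_def, conj_trivial, hxx, n₁, ox₁, o₁, ox₂, o₁₂, ox₃, o₁₃]
    ring
  · intro y hy z
    obtain ⟨a, b, rfl⟩ := Submodule.mem_span_pair.mp hy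
    rw [master]
    simp only [inner_add_left, real_inner_smul_left, inner_smul_left,
      RCLike.star_def, conj_trivial, o₂, o₃, o₂₁, o₃₁, o₂₃, o₃₂, n₂, n₃]
    ring
  · intro y h0 h1 h2 h3 z
    rw [master, h0, h1, h2, h3, real_inner_smul_left]
    ring
end

section
/- Let (V,⟨·,·⟩,R) be a model with R an algebraic curvature tensor, dim V = n, and 2 ≤ p ≤ n-1. For a p-dimensional subspace σ with orthonormal basis {e₁,…,e_p}, set 𝒥_R(σ) := Σᵢ 𝒥_R(eᵢ). If 𝒥_R(σ) = 0 for every p-dimensional subspace σ of V, then R = 0. -/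
open RealInnerProductSpace

lemma aux_coe_orthonormal {V : Type*} [NormedAddCommGroup V] [InnerProductSpace ℝ V]
    {W : Submodule ℝ V} {ι : Type*} [DecidableEq ι] {g : ι → W} (hg : Orthonormal ℝ g) :
    Orthonormal ℝ (fun i => (g i : V)) := by
  rw [orthonormal_iff_ite] at hg ⊢
  intro i j
  rw [← Submodule.coe_inner]
  exact hg i j

lemma aux_cons_orthonormal {V : Type*} [NormedAddCommGroup V] [InnerProductSpace ℝ V]
    {k : ℕ} {w : V} (hw : ‖w‖ = 1) {f : Fin k → V} (hf : Orthonormal ℝ f)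
    (hperp : ∀ i, ⟪w, f i⟫ = 0) : Orthonormal ℝ (Fin.cons w f) := by
  rw [orthonormal_iff_ite] at hf ⊢
  intro i j
  refine Fin.cases ?_ ?_ i
  · refine Fin.cases ?_ ?_ j
    · simp [real_inner_self_eq_norm_mul_norm, hw]
    · intro j'
      rw [Fin.cons_zero, Fin.cons_succ, if_neg (Ne.symm (Fin.succ_ne_zero j'))]
      exact hperp j'
  · intro i'
    refine Fin.cases ?_ ?_ j
    · rw [Fin.cons_succ, Fin.cons_zero, if_neg (Fin.succ_ne_zero i'), real_inner_comm]
      exact hperp i'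
    · intro j'
      rw [Fin.cons_succ, Fin.cons_succ]
      simp [hf, Fin.succ_inj]

/-- If the higher order Jacobi operator `𝒥_R(σ) = Σᵢ 𝒥_R(eᵢ)` of an algebraic
curvature tensor vanishes on every `p`-dimensional subspace `σ` (with
`2 ≤ p ≤ n-1`), then `R = 0`.  The vanishing is expressed through orthonormal
bases: `Σᵢ R(y, eᵢ, eᵢ, z) = 0` for every orthonormal family `e : Fin p → V`. -/
theorem stmt_17 {V : Type*} [NormedAddCommGroup V] [InnerProductSpace ℝ V]
    [FiniteDimensional ℝ V]
    (R : V →ₗ[ℝ] V →ₗ[ℝ] V →ₗ[ℝ] V →ₗ[ℝ] ℝ)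
    (hanti : ∀ x y z t : V, R x y z t = - R y x z t)
    (hpair : ∀ x y z t : V, R x y z t = R z t x y)
    (hbianchi : ∀ x y z t : V, R x y z t + R y z x t + R z x y t = 0)
    (p : ℕ) (hp2 : 2 ≤ p) (hpn : p ≤ Module.finrank ℝ V - 1)
    (hvanish : ∀ e : Fin p → V, Orthonormal ℝ e →
      ∀ y z : V, ∑ i, R y (e i) (e i) z = 0) :
    R = 0 := by
  classical
  obtain ⟨k, rfl⟩ : ∃ k, p = k + 1 := ⟨p - 1, by omega⟩
  set n := Module.finrank ℝ V with hn
  have hn3 : k + 2 ≤ n := by omega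
  -- Step 1: J(u) = J(v) for unit u, v
  have step1 : ∀ u v : V, ‖u‖ = 1 → ‖v‖ = 1 → ∀ y z : V, R y u u z = R y v v z := by
    intro u v hu hv y z
    set W := (Submodule.span ℝ ({u, v} : Set V))ᗮ with hW
    have hsp : Module.finrank ℝ (Submodule.span ℝ ({u, v} : Set V)) ≤ 2 := by
      refine (finrank_span_le_card ({u, v} : Set V)).trans ?_
      refine le_trans (Finset.card_le_card ?_) (le_trans (Finset.card_insert_le u {v}) (by simp))
      intro x hx
      simp only [Set.mem_toFinset] at hx
      simpa using hx
    have hWrank : k ≤ Module.finrank ℝ W := by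
      have hh : Module.finrank ℝ (Submodule.span ℝ ({u, v} : Set V)) +
          Module.finrank ℝ W = n := by
        rw [hW]
        exact (Submodule.span ℝ ({u, v} : Set V)).finrank_add_finrank_orthogonal
      omega
    set b := stdOrthonormalBasis ℝ W with hb
    set f : Fin k → V := fun i => (b (Fin.castLE hWrank i) : V) with hf
    have hforth : Orthonormal ℝ f :=
      aux_coe_orthonormal (b.orthonormal.comp _ (Fin.castLE_injective hWrank))
    have hfmem : ∀ i, f i ∈ W := fun i => (b (Fin.castLE hWrank i)).2
    have hperp : ∀ w ∈ ({u, v} : Set V), ∀ i, ⟪w, f i⟫ = 0 := by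
      intro w hw i
      exact (Submodule.mem_orthogonal _ _).mp (hfmem i) w (Submodule.subset_span hw)
    have key : ∀ w : V, ‖w‖ = 1 → (∀ i, ⟪w, f i⟫ = 0) →
        R y w w z + ∑ i, R y (f i) (f i) z = 0 := by
      intro w hwn hwp
      have horth : Orthonormal ℝ (Fin.cons w f) := aux_cons_orthonormal hwn hforth hwp
      have := hvanish (Fin.cons w f) horth y z
      rwa [Fin.sum_univ_succ, Fin.cons_zero] at this
    have h1 := key u hu (hperp u (by simp))
    have h2 := key v hv (hperp v (by simp))
    linarith
  -- Step 2: J(u) = 0 for unit u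
  have step2 : ∀ u : V, ‖u‖ = 1 → ∀ y z : V, R y u u z = 0 := by
    intro u hu y z
    set bV := stdOrthonormalBasis ℝ V with hbV
    have hle : k + 1 ≤ n := by omega
    set e : Fin (k + 1) → V := fun i => bV (Fin.castLE hle i) with he
    have heorth : Orthonormal ℝ e := bV.orthonormal.comp _ (Fin.castLE_injective hle)
    have hsum := hvanish e heorth y z
    have heq : ∀ i : Fin (k + 1), R y (e i) (e i) z = R y u u z := fun i =>
      step1 (e i) u (heorth.1 i) hu y z
    rw [Finset.sum_congr rfl (fun i _ => heq i), Finset.sum_const, Finset.card_univ,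
      Fintype.card_fin, nsmul_eq_mul] at hsum
    exact (mul_eq_zero.mp hsum).resolve_left (Nat.cast_ne_zero.mpr (by omega))
  -- Step 3: J(x) = 0 for all x
  have step3 : ∀ x y z : V, R y x x z = 0 := by
    intro x y z
    rcases eq_or_ne x 0 with rfl | hx
    · simp
    · set c := ‖x‖ with hc
      have hc0 : c ≠ 0 := by simpa [hc] using hx
      have hu : ‖c⁻¹ • x‖ = 1 := norm_smul_inv_norm hx
      have := step2 (c⁻¹ • x) hu y z
      simp only [map_smul, LinearMap.smul_apply, smul_eq_mul] at this
      have hcc : c⁻¹ * (c⁻¹ * R y x x z) = 0 := this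
      field_simp at hcc
      rw [mul_zero] at hcc
      exact hcc
  -- Step 4: polarization
  have step4 : ∀ x w y z : V, R y x w z + R y w x z = 0 := by
    intro x w y z
    have := step3 (x + w) y z
    simp only [map_add, LinearMap.add_apply] at this
    rw [step3 x y z, step3 w y z] at this
    linarith
  -- Final step
  ext x y z t
  simp only [LinearMap.zero_apply]
  have h1 := hbianchi x y z t
  have h2 := step4 z x y t   -- R y z x t + R y x z t = 0
  have h3 := step4 y x z t   -- R z y x t + R z x y t = 0  (with first arg z)
  have h4 := hanti x y z t
  have h5 := hanti y z x t
  have h6 := hanti z y x t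
  linarith
end

section
/- Let {K₁,K₂,K₃} be a quaternion structure on a real inner product space V with dim V ≥ 8 divisible by 4, and let V = V₊ ⊕ V₋ be a nontrivial orthogonal decomposition into quaternion-invariant subspaces. Define J₁ := K₁, J₂ := K₂, and J₃ := ∓K₁K₂ on V±. Set R := R_{J₂} - R_{J₁J₂} - R_{J₃} + R_{J₁J₃}. Then the complex Jacobi operator with respect to J = J₁ vanishes identically: for every unit vector x, 𝒥_R(x) + 𝒥_R(J₁x) = 0, yet R ≠ 0. -/
open RealInnerProductSpace

/-- On a quaternion module `V = V₊ ⊕ V₋` with `J₁ = K₁`, `J₂ = K₂`,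
`J₃ = ∓K₁K₂` on `V±`, the tensor `R = R_{J₂} - R_{J₁J₂} - R_{J₃} + R_{J₁J₃}`
has identically vanishing complex Jacobi operator with respect to `J = J₁`,
yet `R ≠ 0`. -/
theorem stmt_18 {V : Type*} [NormedAddCommGroup V] [InnerProductSpace ℝ V]
    [FiniteDimensional ℝ V]
    (hdim8 : 8 ≤ Module.finrank ℝ V) (hdim4 : 4 ∣ Module.finrank ℝ V)
    (K₁ K₂ K₃ : V →ₗ[ℝ] V)
    (hiso₁ : ∀ x y : V, ⟪K₁ x, K₁ y⟫ = ⟪x, y⟫)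
    (hiso₂ : ∀ x y : V, ⟪K₂ x, K₂ y⟫ = ⟪x, y⟫)
    (hiso₃ : ∀ x y : V, ⟪K₃ x, K₃ y⟫ = ⟪x, y⟫)
    (hsq₁ : K₁ ∘ₗ K₁ = -LinearMap.id) (hsq₂ : K₂ ∘ₗ K₂ = -LinearMap.id)
    (hsq₃ : K₃ ∘ₗ K₃ = -LinearMap.id)
    (hanti₁₂ : K₁ ∘ₗ K₂ + K₂ ∘ₗ K₁ = 0) (hanti₁₃ : K₁ ∘ₗ K₃ + K₃ ∘ₗ K₁ = 0)
    (hanti₂₃ : K₂ ∘ₗ K₃ + K₃ ∘ₗ K₂ = 0)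
    (hquat : K₁ ∘ₗ K₂ = K₃)
    -- the nontrivial orthogonal decomposition `V = V₊ ⊕ V₋` into
    -- quaternion-invariant subspaces
    (Vp : Submodule ℝ V) (hbot : Vp ≠ ⊥) (htop : Vp ≠ ⊤)
    (hinv₁ : ∀ x ∈ Vp, K₁ x ∈ Vp) (hinv₂ : ∀ x ∈ Vp, K₂ x ∈ Vp)
    (hinv₃ : ∀ x ∈ Vp, K₃ x ∈ Vp)
    (hinv₁' : ∀ x ∈ Vpᗮ, K₁ x ∈ Vpᗮ) (hinv₂' : ∀ x ∈ Vpᗮ, K₂ x ∈ Vpᗮ)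
    (hinv₃' : ∀ x ∈ Vpᗮ, K₃ x ∈ Vpᗮ)
    -- `J₃ = ∓ K₁K₂` on `V±`
    (J₃ : V →ₗ[ℝ] V)
    (hJ₃p : ∀ x ∈ Vp, J₃ x = -(K₁ (K₂ x)))
    (hJ₃m : ∀ x ∈ Vpᗮ, J₃ x = K₁ (K₂ x))
    (RΨ : (V →ₗ[ℝ] V) → V → V → V → V → ℝ)
    (hRΨ : ∀ (Ψ : V →ₗ[ℝ] V) (x y z t : V), RΨ Ψ x y z t =
      ⟪x, Ψ t⟫ * ⟪y, Ψ z⟫ - ⟪x, Ψ z⟫ * ⟪y, Ψ t⟫ - 2 * ⟪x, Ψ y⟫ * ⟪z, Ψ t⟫)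
    (R : V → V → V → V → ℝ)
    (hR : ∀ x y z t : V, R x y z t =
      RΨ K₂ x y z t - RΨ (K₁ ∘ₗ K₂) x y z t - RΨ J₃ x y z t + RΨ (K₁ ∘ₗ J₃) x y z t) :
    (∀ x : V, ‖x‖ = 1 → ∀ y z : V, R y x x z + R y (K₁ x) (K₁ x) z = 0) ∧ R ≠ 0 := by
  -- pointwise versions of the algebraic identities
  have k1k1 : ∀ v : V, K₁ (K₁ v) = -v := fun v => by
    simpa using LinearMap.congr_fun hsq₁ v
  have k2k2 : ∀ v : V, K₂ (K₂ v) = -v := fun v => by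
    simpa using LinearMap.congr_fun hsq₂ v
  have k3k3 : ∀ v : V, K₃ (K₃ v) = -v := fun v => by
    simpa using LinearMap.congr_fun hsq₃ v
  have k1k2 : ∀ v : V, K₁ (K₂ v) = K₃ v := fun v => by
    simpa using LinearMap.congr_fun hquat v
  have k2k1 : ∀ v : V, K₂ (K₁ v) = -(K₁ (K₂ v)) := fun v => by
    have h := LinearMap.congr_fun hanti₁₂ v
    simp only [LinearMap.add_apply, LinearMap.comp_apply, LinearMap.zero_apply] at h
    exact eq_neg_of_add_eq_zero_right h
  -- skew-symmetry
  have skw : ∀ (K : V →ₗ[ℝ] V), (∀ u v : V, ⟪K u, K v⟫ = ⟪u, v⟫) →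
      (∀ v : V, K (K v) = -v) → ∀ u v : V, ⟪u, K v⟫ = -⟪K u, v⟫ := by
    intro K hiso hsq u v
    calc ⟪u, K v⟫ = ⟪K u, K (K v)⟫ := (hiso u (K v)).symm
      _ = ⟪K u, -v⟫ := by rw [hsq]
      _ = -⟪K u, v⟫ := inner_neg_right _ _
  have skew₁ := skw K₁ hiso₁ k1k1
  have skew₂ := skw K₂ hiso₂ k2k2
  have skew₃ := skw K₃ hiso₃ k3k3
  have self₁ : ∀ u : V, ⟪u, K₁ u⟫ = 0 := by
    intro u
    have h := skew₁ u u
    have h2 : ⟪u, K₁ u⟫ = ⟪K₁ u, u⟫ := real_inner_comm _ _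
    linarith
  have self₂ : ∀ u : V, ⟪u, K₂ u⟫ = 0 := by
    intro u
    have h := skew₂ u u
    have h2 : ⟪u, K₂ u⟫ = ⟪K₂ u, u⟫ := real_inner_comm _ _
    linarith
  have self₃ : ∀ u : V, ⟪u, K₃ u⟫ = 0 := by
    intro u
    have h := skew₃ u u
    have h2 : ⟪u, K₃ u⟫ = ⟪K₃ u, u⟫ := real_inner_comm _ _
    linarith
  have skew₁₂ : ∀ u v : V, ⟪u, (K₁ ∘ₗ K₂) v⟫ = -⟪(K₁ ∘ₗ K₂) u, v⟫ := by
    intro u v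
    simp only [LinearMap.comp_apply, k1k2]
    exact skew₃ u v
  -- skewness of maps that are ±A on the two pieces
  have key_skew : ∀ (Φ A : V →ₗ[ℝ] V), (∀ u v : V, ⟪u, A v⟫ = -⟪A u, v⟫) →
      (∀ x ∈ Vp, A x ∈ Vp) → (∀ x ∈ Vpᗮ, A x ∈ Vpᗮ) →
      (∀ x ∈ Vp, Φ x = A x) → (∀ x ∈ Vpᗮ, Φ x = -(A x)) →
      ∀ u v : V, ⟪u, Φ v⟫ = -⟪Φ u, v⟫ := by
    intro Φ A hA hAp hAm hp hm u v
    obtain ⟨p, hp1, m, hm1, rfl⟩ := Vp.exists_add_mem_mem_orthogonal u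
    obtain ⟨q, hq1, n, hn1, rfl⟩ := Vp.exists_add_mem_mem_orthogonal v
    have e1 : Φ (q + n) = A q - A n := by
      rw [map_add, hp q hq1, hm n hn1, sub_eq_add_neg]
    have e2 : Φ (p + m) = A p - A m := by
      rw [map_add, hp p hp1, hm m hm1, sub_eq_add_neg]
    have z1 : ⟪p, A n⟫ = 0 :=
      Submodule.inner_right_of_mem_orthogonal hp1 (hAm n hn1)
    have z2 : ⟪m, A q⟫ = 0 :=
      Submodule.inner_left_of_mem_orthogonal (hAp q hq1) hm1
    have z3 : ⟪A p, n⟫ = 0 :=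
      Submodule.inner_right_of_mem_orthogonal (hAp p hp1) hn1
    have z4 : ⟪A m, q⟫ = 0 :=
      Submodule.inner_left_of_mem_orthogonal hq1 (hAm m hm1)
    rw [e1, e2, inner_add_left, inner_sub_right, inner_sub_right,
      inner_sub_left, inner_add_right, inner_add_right]
    rw [z1, z2, z3, z4, hA p q, hA m n]
    ring
  have skewJ₃ : ∀ u v : V, ⟪u, J₃ v⟫ = -⟪J₃ u, v⟫ := by
    refine key_skew J₃ (-K₃) ?_ ?_ ?_ ?_ ?_
    · intro u v
      simp only [LinearMap.neg_apply, inner_neg_right, inner_neg_left, neg_neg,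
        skew₃ u v]
    · intro x hx; simpa using Vp.neg_mem (hinv₃ x hx)
    · intro x hx; simpa using Vpᗮ.neg_mem (hinv₃' x hx)
    · intro x hx; rw [hJ₃p x hx]; simp [k1k2]
    · intro x hx; rw [hJ₃m x hx]; simp [k1k2]
  have skewK₁J₃ : ∀ u v : V, ⟪u, (K₁ ∘ₗ J₃) v⟫ = -⟪(K₁ ∘ₗ J₃) u, v⟫ := by
    refine key_skew (K₁ ∘ₗ J₃) K₂ skew₂ hinv₂ hinv₂' ?_ ?_
    · intro x hx
      simp only [LinearMap.comp_apply, hJ₃p x hx, map_neg, k1k1, neg_neg]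
    · intro x hx
      simp only [LinearMap.comp_apply, hJ₃m x hx, k1k1]
  -- Jacobi value for a skew operator
  have key : ∀ (Ψ : V →ₗ[ℝ] V), (∀ u v : V, ⟪u, Ψ v⟫ = -⟪Ψ u, v⟫) →
      ∀ x y z : V, RΨ Ψ y x x z = 3 * ⟪y, Ψ x⟫ * ⟪Ψ x, z⟫ := by
    intro Ψ hs x y z
    have h0 : ⟪x, Ψ x⟫ = 0 := by
      have h := hs x x
      have h2 : ⟪x, Ψ x⟫ = ⟪Ψ x, x⟫ := real_inner_comm _ _
      linarith
    rw [hRΨ, h0, hs x z]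
    ring
  constructor
  · intro x _hx y z
    obtain ⟨p, hp, m, hm, rfl⟩ := Vp.exists_add_mem_mem_orthogonal x
    have hK₁p := hinv₁ p hp
    have hK₁m := hinv₁' m hm
    have h1 : K₂ (p + m) = K₂ p + K₂ m := map_add _ _ _
    have h2 : (K₁ ∘ₗ K₂) (p + m) = K₁ (K₂ p) + K₁ (K₂ m) := by
      simp [LinearMap.comp_apply]
    have h3 : J₃ (p + m) = -(K₁ (K₂ p)) + K₁ (K₂ m) := by
      rw [map_add, hJ₃p p hp, hJ₃m m hm]
    have h4 : (K₁ ∘ₗ J₃) (p + m) = K₂ p - K₂ m := by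
      rw [LinearMap.comp_apply, h3, map_add, map_neg, k1k1, k1k1, neg_neg,
        ← sub_eq_add_neg]
    have h5 : K₂ (K₁ (p + m)) = -(K₁ (K₂ p)) - K₁ (K₂ m) := by
      rw [map_add, map_add, k2k1, k2k1]; abel
    have h6 : (K₁ ∘ₗ K₂) (K₁ (p + m)) = K₂ p + K₂ m := by
      simp only [LinearMap.comp_apply, h5, map_sub, map_neg, k1k1, neg_neg]
      abel
    have h7 : J₃ (K₁ (p + m)) = -(K₂ p) + K₂ m := by
      rw [map_add, map_add, hJ₃p _ hK₁p, hJ₃m _ hK₁m, k2k1 p, k2k1 m]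
      simp only [map_neg, k1k1, neg_neg]
    have h8 : (K₁ ∘ₗ J₃) (K₁ (p + m)) = -(K₁ (K₂ p)) + K₁ (K₂ m) := by
      rw [LinearMap.comp_apply, h7, map_add, map_neg]
    rw [hR, hR, key K₂ skew₂ (p + m), key (K₁ ∘ₗ K₂) skew₁₂ (p + m),
      key J₃ skewJ₃ (p + m), key (K₁ ∘ₗ J₃) skewK₁J₃ (p + m),
      key K₂ skew₂ (K₁ (p + m)), key (K₁ ∘ₗ K₂) skew₁₂ (K₁ (p + m)),
      key J₃ skewJ₃ (K₁ (p + m)), key (K₁ ∘ₗ J₃) skewK₁J₃ (K₁ (p + m)),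
      h1, h2, h3, h4, h5, h6, h7, h8]
    simp only [inner_add_left, inner_add_right, inner_sub_left, inner_sub_right,
      inner_neg_left, inner_neg_right]
    ring
  · intro hzero
    obtain ⟨e, he, hne⟩ := Submodule.ne_bot_iff Vp |>.1 hbot
    have hK₂e := hinv₂ e he
    -- compute all operator values at e and K₂ e
    have v1 : K₂ (K₂ e) = -e := k2k2 e
    have v2 : (K₁ ∘ₗ K₂) e = K₃ e := by simp [LinearMap.comp_apply, k1k2]
    have v3 : (K₁ ∘ₗ K₂) (K₂ e) = -(K₁ e) := by
      simp [LinearMap.comp_apply, v1]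
    have v4 : J₃ e = -(K₃ e) := by rw [hJ₃p e he, k1k2]
    have v5 : J₃ (K₂ e) = K₁ e := by rw [hJ₃p _ hK₂e, v1, map_neg, neg_neg]
    have v6 : (K₁ ∘ₗ J₃) e = K₂ e := by
      simp only [LinearMap.comp_apply, v4, map_neg, k1k2]
      rw [← k1k2, k1k1, neg_neg]
    have v7 : (K₁ ∘ₗ J₃) (K₂ e) = -e := by
      simp only [LinearMap.comp_apply, v5, k1k1]
    have hval := hR e (K₂ e) (K₂ e) e
    rw [hRΨ, hRΨ, hRΨ, hRΨ, v1, v2, v3, v4, v5, v6, v7] at hval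
    have s12 : ⟪K₂ e, K₃ e⟫ = 0 := by rw [← k1k2]; exact self₁ (K₂ e)
    simp only [inner_neg_right, self₁, self₂, self₃, s12, hiso₂,
      mul_zero, zero_mul, neg_zero, sub_zero, zero_sub, mul_neg, neg_neg] at hval
    rw [hzero] at hval
    simp only [Pi.zero_apply] at hval
    have h0 : ⟪e, e⟫ ≠ (0:ℝ) := fun h => hne (inner_self_eq_zero.1 h)
    have hpos : (0:ℝ) < ⟪e, e⟫ := lt_of_le_of_ne real_inner_self_nonneg (Ne.symm h0)
    nlinarith [hval, hpos]
end
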